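/- arXiv:1410.2141 — 9 statements merged into one kernel-verified Lean document; each statement's English description precedes it below -/
import Mathlib

section
/- Let α_k (k ≥ 1) be the decay operator on Y = Z_2[y_0, y_1, ...] and let α_k^* be the fusion operator defined on a monomial y^e by α_k^*(y^e) = 0 if e_{k-1} ≤ 1, and α_k^*(y^e) = y_{k-1}^{e_{k-1}-2} y_k^{e_k+1} ∏_{i ≠ k-1, k} y_i^{e_i} if e_{k-1} ≥ 2, extended Z_2-linearly. Then for distinct positive integers i ≠ j, the operators α_i^* and α_j commute: α_i^* α_j = α_j α_i^*. -/
open MvPolynomial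

/-- `Y = Z_2[y_0, y_1, y_2, ...]`. -/
abbrev Ypoly := MvPolynomial ℕ (ZMod 2)

/-- For distinct positive integers `i ≠ j`, the fusion operator `α_i^*` (which sends a
monomial `y^e` to `y_{i-1}^{e_{i-1}-2} y_i^{e_i+1} ∏_{l ≠ i-1, i} y_l^{e_l}` if
`e_{i-1} ≥ 2` and to `0` if `e_{i-1} ≤ 1`) commutes with the decay operator `α_j`
(the derivation with `α_j y_j = y_{j-1}^2`, `α_j y_l = 0` for `l ≠ j`):
`α_i^* α_j = α_j α_i^*`. -/
theorem stmt3 (i j : ℕ) (hi : 1 ≤ i) (hj : 1 ≤ j) (hij : i ≠ j)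
    (αj : Derivation (ZMod 2) Ypoly Ypoly)
    (hαjj : αj (X j) = (X (j - 1)) ^ 2)
    (hαj : ∀ k : ℕ, k ≠ j → αj (X k) = 0)
    (Fi : Ypoly →ₗ[ZMod 2] Ypoly)
    (hFi : ∀ e : ℕ →₀ ℕ, Fi (monomial e 1) =
      if 2 ≤ e (i - 1) then
        monomial ((e.update (i - 1) (e (i - 1) - 2)).update i (e i + 1)) 1
      else 0) :
    ∀ p : Ypoly, Fi (αj p) = αj (Fi p) := by
  classical
  have two_zero : ((2 : ℕ) : ZMod 2) = 0 := by decide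
  -- formula for αj on monomials
  have key : ∀ e : ℕ →₀ ℕ, αj (monomial e 1) =
      monomial (e - Finsupp.single j 1 + Finsupp.single (j - 1) 2) ((e j : ZMod 2)) := by
    have hD : αj = mkDerivation (ZMod 2)
        (fun l => if l = j then ((X (j - 1) : Ypoly)) ^ 2 else 0) := by
      apply derivation_ext
      intro l
      rcases eq_or_ne l j with rfl | h
      · simp [hαjj]
      · simp [h, hαj l h]
    intro e
    rw [hD, mkDerivation_monomial, one_smul, Finsupp.sum]
    by_cases hmem : j ∈ e.support
    · rw [Finset.sum_eq_single_of_mem j hmem (by intro l _ h; simp [h])]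
      simp [X_pow_eq_monomial, monomial_mul]
    · rw [Finset.sum_eq_zero (by
        intro l hl
        have h : l ≠ j := by rintro rfl; exact hmem hl
        simp [h])]
      have h0 : e j = 0 := Finsupp.notMem_support_iff.mp hmem
      rw [h0]
      simp
  have main : ∀ e : ℕ →₀ ℕ, Fi (αj (monomial e 1)) = αj (Fi (monomial e 1)) := by
    intro e
    set e' := e - Finsupp.single j 1 + Finsupp.single (j - 1) 2 with he'
    have hjj1 : j - 1 ≠ j := by omega
    have hij1 : j - 1 ≠ i - 1 := by omega
    have he'app : ∀ l : ℕ,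
        e' l = e l - (if j = l then 1 else 0) + (if j - 1 = l then 2 else 0) := by
      intro l
      simp [he', Finsupp.add_apply, Finsupp.tsub_apply, Finsupp.single_apply]
    rw [key e, hFi e]
    have hsm : (monomial e' ((e j : ZMod 2)) : Ypoly)
        = (e j : ZMod 2) • monomial e' 1 := by
      rw [smul_monomial, smul_eq_mul, mul_one]
    rw [hsm, map_smul, hFi e']
    by_cases hc : 2 ≤ e (i - 1)
    · rw [if_pos hc, key]
      set e'' := (e.update (i - 1) (e (i - 1) - 2)).update i (e i + 1) with he''
      have he''app : ∀ l : ℕ, e'' l =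
          if l = i then e i + 1 else if l = i - 1 then e (i - 1) - 2 else e l := by
        intro l
        simp only [he'', Finsupp.coe_update, Function.update_apply]
      by_cases hji : j = i - 1
      · -- j = i - 1, so i = j + 1
        have hc' : 2 ≤ e j := by rwa [hji]
        have he'i1 : e' (i - 1) = e j - 1 := by
          rw [he'app, if_pos hji, if_neg hij1, ← hji]; omega
        have he''j : e'' j = e j - 2 := by
          rw [he''app, if_neg (by omega), if_pos hji, ← hji]
        by_cases h3 : 3 ≤ e j
        · rw [if_pos (by omega : 2 ≤ e' (i - 1))]
          have hcast : ((e'' j : ℕ) : ZMod 2) = ((e j : ℕ) : ZMod 2) := by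
            rw [he''j, Nat.cast_sub (by omega), two_zero, sub_zero]
          rw [hcast, smul_monomial, smul_eq_mul, mul_one]
          have heq : e (i - 1) = e j := by rw [hji]
          have hE : (e'.update (i - 1) (e' (i - 1) - 2)).update i (e' i + 1)
              = e'' - Finsupp.single j 1 + Finsupp.single (j - 1) 2 := by
            ext l
            simp only [Finsupp.add_apply, Finsupp.tsub_apply, Finsupp.single_apply,
              Finsupp.coe_update, Function.update_apply, he'app, he''app]
            split_ifs <;> omega
          rw [hE]
        · -- e j = 2
          rw [if_neg (by omega : ¬ 2 ≤ e' (i - 1)), smul_zero, he''j,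
            (by omega : e j - 2 = 0)]
          simp
      · -- j ≠ i - 1 (generic case, includes j = i + 1)
        have he'i1 : e' (i - 1) = e (i - 1) := by
          rw [he'app, if_neg (by omega), if_neg hij1]; omega
        have he''j : e'' j = e j := by
          rw [he''app, if_neg (by omega), if_neg (by omega)]
        rw [if_pos (by omega : 2 ≤ e' (i - 1)), he''j, smul_monomial, smul_eq_mul, mul_one]
        have hE : (e'.update (i - 1) (e' (i - 1) - 2)).update i (e' i + 1)
            = e'' - Finsupp.single j 1 + Finsupp.single (j - 1) 2 := by
          ext l
          simp only [Finsupp.add_apply, Finsupp.tsub_apply, Finsupp.single_apply,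
            Finsupp.coe_update, Function.update_apply, he'app, he''app]
          split_ifs <;> omega
        rw [hE]
    · rw [if_neg hc]
      have hle : e' (i - 1) ≤ e (i - 1) := by
        rw [he'app, if_neg hij1]; omega
      rw [if_neg (by omega : ¬ 2 ≤ e' (i - 1)), smul_zero, map_zero]
  intro p
  induction p using MvPolynomial.induction_on' with
  | monomial e a =>
    have : (monomial e a : Ypoly) = a • monomial e 1 := by
      rw [smul_monomial, smul_eq_mul, mul_one]
    rw [this, Derivation.map_smul, map_smul, main, ← Derivation.map_smul, ← map_smul]
  | add p q hp hq => simp [map_add, hp, hq]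
end

section
/- Let α_k and α_k^* (k ≥ 1) be the decay and fusion operators on Y = Z_2[y_0, y_1, ...]. For any monomial y^e with exponent vector e, (α_k α_k^* + α_k^* α_k)(y^e) equals y^e if e_{k-1} ≥ 2 or e_k is odd, and equals 0 if e_{k-1} ≤ 1 and e_k is even. -/
open MvPolynomial

lemma alpha_monomial (k : ℕ)
    (α : Derivation (ZMod 2) Ypoly Ypoly)
    (hαk : α (X k) = (X (k - 1)) ^ 2)
    (hα : ∀ i : ℕ, i ≠ k → α (X i) = 0) :
    ∀ e : ℕ →₀ ℕ, α (monomial e 1) =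
      (e k : ZMod 2) • monomial (e - Finsupp.single k 1 + Finsupp.single (k-1) 2) 1 := by
  have hαeq : α = mkDerivation (ZMod 2) (fun i => if i = k then (X (k-1) : Ypoly)^2 else 0) :=
    derivation_ext fun i => by by_cases h : i = k <;> simp [h, hαk, hα]
  intro e
  rw [hαeq, mkDerivation_monomial, one_smul, Finsupp.sum]
  rw [Finset.sum_eq_single k]
  · by_cases hks : e k = 0
    · simp [hks]
    · simp only [if_pos rfl, if_true, smul_eq_mul, X_pow_eq_monomial, monomial_mul, mul_one]
      simp [monomial_mul, smul_monomial]
  · intro i _ hik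
    simp [hik]
  · intro h
    simp [Finsupp.notMem_support_iff.mp h]

lemma natCast_odd_zmod2 {n : ℕ} (h : Odd n) : (n : ZMod 2) = 1 := by
  rw [← ZMod.natCast_mod, Nat.odd_iff.mp h, Nat.cast_one]

lemma natCast_even_zmod2 {n : ℕ} (h : Even n) : (n : ZMod 2) = 0 := by
  rw [← ZMod.natCast_mod, Nat.even_iff.mp h, Nat.cast_zero]

/-- For `k ≥ 1`, with `α_k` the decay operator and `α_k^*` the fusion operator on `Y`,
on any monomial `y^e` one has `(α_k α_k^* + α_k^* α_k)(y^e) = y^e` if `e_{k-1} ≥ 2` or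
`e_k` is odd, and `= 0` if `e_{k-1} ≤ 1` and `e_k` is even. -/
theorem stmt4 (k : ℕ) (hk : 1 ≤ k)
    (α : Derivation (ZMod 2) Ypoly Ypoly)
    (hαk : α (X k) = (X (k - 1)) ^ 2)
    (hα : ∀ i : ℕ, i ≠ k → α (X i) = 0)
    (F : Ypoly →ₗ[ZMod 2] Ypoly)
    (hF : ∀ e : ℕ →₀ ℕ, F (monomial e 1) =
      if 2 ≤ e (k - 1) then
        monomial ((e.update (k - 1) (e (k - 1) - 2)).update k (e k + 1)) 1
      else 0) :
    ∀ e : ℕ →₀ ℕ,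
      α (F (monomial e 1)) + F (α (monomial e 1)) =
        if 2 ≤ e (k - 1) ∨ Odd (e k) then monomial e 1 else 0 := by
  have key := alpha_monomial k α hαk hα
  intro e
  have hjk : k - 1 ≠ k := by omega
  have hkj : k ≠ k - 1 := hjk.symm
  set f : ℕ →₀ ℕ := e - Finsupp.single k 1 + Finsupp.single (k-1) 2 with hfdef
  have hfj : f (k-1) = e (k-1) + 2 := by
    simp [hfdef, Finsupp.tsub_apply, Finsupp.single_apply, hjk, hkj]
  have hfk : f k = e k - 1 := by
    simp [hfdef, Finsupp.tsub_apply, Finsupp.single_apply, hjk, hkj]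
  set g : ℕ →₀ ℕ := (f.update (k - 1) (f (k - 1) - 2)).update k (f k + 1) with hgdef
  have hFα : F (α (monomial e 1)) = (e k : ZMod 2) • monomial g 1 := by
    rw [key e, map_smul, hF f, if_pos (by omega)]
  have hge : Odd (e k) → g = e := by
    intro hodd
    have h1 : 1 ≤ e k := hodd.pos
    ext i
    by_cases hik : i = k
    · subst hik
      simp only [hgdef, Finsupp.coe_update, Function.update_apply, if_pos rfl, if_true, hfk]
      omega
    · by_cases hij : i = k - 1
      · subst hij
        simp only [hgdef, Finsupp.coe_update, Function.update_apply, if_neg hjk, if_pos rfl, if_true, hfj]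
        omega
      · have hki : k ≠ i := fun h => hik h.symm
        have hji : k - 1 ≠ i := fun h => hij h.symm
        simp only [hgdef, hfdef, Finsupp.coe_update, Function.update_apply, if_neg hik,
          if_neg hij, Finsupp.add_apply, Finsupp.tsub_apply, Finsupp.single_apply,
          if_neg hki, if_neg hji]
        omega
  rw [hF e]
  by_cases ha : 2 ≤ e (k - 1)
  · rw [if_pos ha]
    set e' : ℕ →₀ ℕ := (e.update (k - 1) (e (k - 1) - 2)).update k (e k + 1) with he'def
    have he'k : e' k = e k + 1 := by
      simp [he'def, Finsupp.coe_update, Function.update_apply]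
    have h1 : e' - Finsupp.single k 1 + Finsupp.single (k-1) 2 = e := by
      ext i
      by_cases hik : i = k
      · subst hik
        simp only [Finsupp.add_apply, Finsupp.tsub_apply, he'k, Finsupp.single_apply,
          if_pos rfl, if_true, if_neg hjk]
        omega
      · by_cases hij : i = k - 1
        · subst hij
          simp only [Finsupp.add_apply, Finsupp.tsub_apply, he'def, Finsupp.coe_update,
            Function.update_apply, if_neg hjk, if_pos rfl, if_true, Finsupp.single_apply, if_neg hkj]
          omega
        · have hki : k ≠ i := fun h => hik h.symm
          have hji : k - 1 ≠ i := fun h => hij h.symm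
          simp only [Finsupp.add_apply, Finsupp.tsub_apply, he'def, Finsupp.coe_update,
            Function.update_apply, if_neg hik, if_neg hij, Finsupp.single_apply,
            if_neg hki, if_neg hji]
          omega
    rw [key e', h1, he'k, hFα]
    rcases Nat.even_or_odd (e k) with hev | hodd
    · rw [natCast_even_zmod2 hev, natCast_odd_zmod2 (Nat.odd_add_one.mpr (Nat.not_odd_iff_even.mpr hev)),
        zero_smul, one_smul, add_zero, if_pos (Or.inl ha)]
    · rw [natCast_odd_zmod2 hodd,
        natCast_even_zmod2 (Nat.even_add_one.mpr (Nat.not_even_iff_odd.mpr hodd)),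
        hge hodd, zero_smul, one_smul, zero_add, if_pos (Or.inr hodd)]
  · rw [if_neg ha, map_zero, zero_add, hFα]
    rcases Nat.even_or_odd (e k) with hev | hodd
    · rw [natCast_even_zmod2 hev, zero_smul,
        if_neg (by rintro (h | h); exact ha h; exact (Nat.not_odd_iff_even.mpr hev) h)]
    · rw [natCast_odd_zmod2 hodd, one_smul, hge hodd, if_pos (Or.inr hodd)]
end

section
/- For integers 1 ≤ j ≤ i, the decay operator α_j annihilates the level subspace Y^i: α_j(Y^i) = 0. Moreover α_j annihilates Y^∞ for every j ≥ 1. -/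
open MvPolynomial

/-- The level condition on exponent vectors (levels `some i` for finite `i`, `none` = `∞`). -/
def LevelCond : Option ℕ → (ℕ →₀ ℕ) → Prop
  | some 0, e => 2 ≤ e 0 ∨ Odd (e 1)
  | some (i + 1), e => e 0 ≤ 1 ∧ (∀ j, 1 ≤ j → j ≤ i → e j = 0) ∧
      Even (e (i + 1)) ∧ (2 ≤ e (i + 1) ∨ Odd (e (i + 2)))
  | none, e => e 0 ≤ 1 ∧ ∀ j, 1 ≤ j → e j = 0

lemma key_lemma (D : Derivation (ZMod 2) Ypoly Ypoly) (j : ℕ)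
    (h : ∀ k, k ≠ j → D (X k) = 0) (e : ℕ →₀ ℕ) (he : Even (e j)) :
    D (monomial e (1 : ZMod 2)) = 0 := by
  have hD : D = mkDerivation (ZMod 2) (fun k => D (X k)) :=
    derivation_ext fun i => (mkDerivation_X (ZMod 2) (fun k => D (X k)) i).symm
  rw [hD, mkDerivation_monomial, one_smul]
  rw [Finsupp.sum]
  refine Finset.sum_eq_zero fun i _ => ?_
  rcases eq_or_ne i j with rfl | hij
  · have : ((e i : ℕ) : ZMod 2) = 0 := by
      rw [ZMod.natCast_eq_zero_iff]
      exact he.two_dvd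
    rw [this, map_zero, zero_smul]
  · rw [h i hij, smul_zero]

/-- For `1 ≤ j ≤ i`, the decay operator `α_j` annihilates every monomial of level `i`,
hence annihilates `Y^i`; moreover every `α_j` (for `j ≥ 1`) annihilates `Y^∞`. -/
theorem stmt6 (α : ℕ → Derivation (ZMod 2) Ypoly Ypoly)
    (hα1 : ∀ j : ℕ, 1 ≤ j → (α j) (X j) = (X (j - 1)) ^ 2)
    (hα2 : ∀ j k : ℕ, k ≠ j → (α j) (X k) = 0) :
    (∀ i j : ℕ, 1 ≤ j → j ≤ i →
      ∀ e : ℕ →₀ ℕ, LevelCond (some i) e → (α j) (monomial e (1 : ZMod 2)) = 0) ∧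
    (∀ j : ℕ, 1 ≤ j →
      ∀ e : ℕ →₀ ℕ, LevelCond none e → (α j) (monomial e (1 : ZMod 2)) = 0) := by
  constructor
  · intro i j hj hji e he
    refine key_lemma (α j) j (fun k hk => hα2 j k hk) e ?_
    cases i with
    | zero => omega
    | succ n =>
      obtain ⟨-, h2, h3, -⟩ := he
      rcases eq_or_lt_of_le hji with rfl | hlt
      · exact h3
      · rw [h2 j hj (by omega)]; exact Even.zero
  · intro j hj e he
    refine key_lemma (α j) j (fun k hk => hα2 j k hk) e ?_
    rw [he.2 j hj]; exact Even.zero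
end

section
/- For every level index i ∈ {0, 1, 2, ...} ∪ {∞} and every integer j ≥ 1, the decay operator α_j maps the level subspace Y^i into itself: α_j(Y^i) ⊆ Y^i. Consequently each Y^i is a subcomplex of (Y, ∂) where ∂ = Σ_{j≥1} α_j. -/
open MvPolynomial

/-- The level subspace `Y^l`. -/
noncomputable def Ysub (l : Option ℕ) : Submodule (ZMod 2) Ypoly :=
  Submodule.span (ZMod 2) {p | ∃ e : ℕ →₀ ℕ, LevelCond l e ∧ p = monomial e 1}

lemma deriv_mono (D' : Derivation (ZMod 2) Ypoly Ypoly) (e : ℕ →₀ ℕ) :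
    D' (monomial e 1) =
      e.sum fun i k => monomial (e - Finsupp.single i 1) (k : ZMod 2) * D' (X i) := by
  have h : D' = mkDerivation (ZMod 2) (fun i => D' (X i)) :=
    derivation_ext fun i => by rw [mkDerivation_X]
  conv_lhs => rw [h]
  rw [mkDerivation_monomial, one_smul]
  refine Finsupp.sum_congr fun i _ => ?_
  simp [smul_eq_mul]

lemma alpha_mono (α : Derivation (ZMod 2) Ypoly Ypoly) (j : ℕ) (hj : 1 ≤ j)
    (h1 : α (X j) = (X (j - 1)) ^ 2) (h2 : ∀ k, k ≠ j → α (X k) = 0) (e : ℕ →₀ ℕ) :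
    α (monomial e 1) =
      ((e j : ZMod 2)) • monomial (e - Finsupp.single j 1 + Finsupp.single (j - 1) 2) 1 := by
  rw [deriv_mono]
  rw [Finsupp.sum_eq_single j]
  · rw [h1, X_pow_eq_monomial, monomial_mul, mul_one, MvPolynomial.smul_monomial, smul_eq_mul,
      mul_one]
  · intro b _ hb; rw [h2 b hb, mul_zero]
  · intro _; simp

lemma newexp_apply (j : ℕ) (hj : 1 ≤ j) (e : ℕ →₀ ℕ) (k : ℕ) :
    ((e - Finsupp.single j 1 + Finsupp.single (j - 1) 2) : ℕ →₀ ℕ) k =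
      (if k = j then e j - 1 else if k = j - 1 then e k + 2 else e k) := by
  have hne : j - 1 ≠ j := by omega
  rcases eq_or_ne k j with rfl | h1
  · simp [Finsupp.tsub_apply, Finsupp.single_apply, hne]
  · rcases eq_or_ne k (j - 1) with rfl | h2
    · simp [Finsupp.tsub_apply, Finsupp.single_apply, hne, Ne.symm hne]
    · simp [Finsupp.tsub_apply, Finsupp.single_apply, h1, h2, Ne.symm h1, Ne.symm h2]

lemma level_new (l : Option ℕ) (j : ℕ) (hj : 1 ≤ j) (e : ℕ →₀ ℕ)
    (he : LevelCond l e) (hodd : Odd (e j)) :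
    LevelCond l (e - Finsupp.single j 1 + Finsupp.single (j - 1) 2) := by
  set e' := e - Finsupp.single j 1 + Finsupp.single (j - 1) 2 with he'
  have hval := newexp_apply j hj e
  match l with
  | none =>
    exact absurd (he.2 j hj ▸ hodd) (by simp)
  | some 0 =>
    rcases eq_or_ne j 1 with rfl | hne
    · left; rw [hval 0]; simp
    · rw [show LevelCond (some 0) e' ↔ (2 ≤ e' 0 ∨ Odd (e' 1)) from Iff.rfl]
      rw [hval 0, hval 1]
      rcases eq_or_ne j 2 with rfl | h2
      · simpa [Nat.odd_add] using (show 2 ≤ e 0 ∨ Odd (e 1) from he)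
      · have : ¬ (1 = j) := by omega
        have : ¬ (1 = j - 1) := by omega
        simpa [show ¬ (0 = j) by omega, show ¬ (0 = j - 1) by omega, ‹¬ (1 = j)›,
          ‹¬ (1 = j - 1)›] using (show 2 ≤ e 0 ∨ Odd (e 1) from he)
  | some (i + 1) =>
    obtain ⟨h0, hmid, hev, hlast⟩ := he
    have hji : i + 2 ≤ j := by
      by_contra hc
      push_neg at hc
      rcases Nat.lt_or_ge j (i + 1) with h | h
      · rw [hmid j hj (by omega)] at hodd; simp at hodd
      · have : j = i + 1 := by omega
        rw [this] at hodd
        exact (Nat.not_odd_iff_even.mpr hev) hodd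
    refine ⟨?_, ?_, ?_, ?_⟩
    · rw [hval 0]; simpa [show ¬ (0 = j) by omega, show ¬ (0 = j - 1) by omega] using h0
    · intro k hk1 hki
      rw [hval k]
      simpa [show ¬ (k = j) by omega, show ¬ (k = j - 1) by omega] using hmid k hk1 hki
    · rw [hval (i + 1)]
      rcases eq_or_ne j (i + 2) with rfl | hne
      · simpa [Nat.even_add] using hev
      · simpa [show ¬ (i + 1 = j) by omega, show ¬ (i + 1 = j - 1) by omega] using hev
    · rcases eq_or_ne j (i + 2) with rfl | hne
      · left; rw [hval (i + 1)]; simp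
      · rw [hval (i + 1), hval (i + 2)]
        rcases eq_or_ne j (i + 3) with rfl | h3
        · simpa [show ¬ (i + 1 = i + 3) by omega, show ¬ (i + 1 = i + 3 - 1) by omega,
            show ¬ (i + 2 = i + 3) by omega, Nat.odd_add] using hlast
        · simpa [show ¬ (i + 1 = j) by omega, show ¬ (i + 1 = j - 1) by omega,
            show ¬ (i + 2 = j) by omega, show ¬ (i + 2 = j - 1) by omega] using hlast

lemma alpha_mono_mem (α : Derivation (ZMod 2) Ypoly Ypoly) (j : ℕ) (hj : 1 ≤ j)
    (h1 : α (X j) = (X (j - 1)) ^ 2) (h2 : ∀ k, k ≠ j → α (X k) = 0)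
    (l : Option ℕ) (e : ℕ →₀ ℕ) (he : LevelCond l e) :
    α (monomial e 1) ∈ Ysub l := by
  rw [alpha_mono α j hj h1 h2 e]
  rcases Nat.even_or_odd (e j) with hev | hodd
  · have : ((e j : ZMod 2)) = 0 := by
      obtain ⟨m, hm⟩ := hev
      rw [hm]; push_cast; exact CharTwo.add_self_eq_zero _
    rw [this, zero_smul]; exact zero_mem _
  · exact Submodule.smul_mem _ _ (Submodule.subset_span ⟨_, level_new l j hj e he hodd, rfl⟩)

/-- Every decay operator `α_j` (`j ≥ 1`) maps each level subspace `Y^l` into itself, and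
consequently each `Y^l` is a subcomplex of `(Y, ∂)`, where `∂ = Σ_{j≥1} α_j` is the
derivation with `∂ y_0 = 0`, `∂ y_k = y_{k-1}^2`. -/
theorem stmt7 (α : ℕ → Derivation (ZMod 2) Ypoly Ypoly)
    (hα1 : ∀ j : ℕ, 1 ≤ j → (α j) (X j) = (X (j - 1)) ^ 2)
    (hα2 : ∀ j k : ℕ, k ≠ j → (α j) (X k) = 0)
    (D : Derivation (ZMod 2) Ypoly Ypoly)
    (h0 : D (X 0) = 0)
    (hs : ∀ i : ℕ, D (X (i + 1)) = (X i) ^ 2) :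
    (∀ j : ℕ, 1 ≤ j → ∀ l : Option ℕ, ∀ f ∈ Ysub l, (α j) f ∈ Ysub l) ∧
    (∀ l : Option ℕ, ∀ f ∈ Ysub l, D f ∈ Ysub l) := by
  have key : ∀ l : Option ℕ, ∀ e : ℕ →₀ ℕ, LevelCond l e →
      ∀ j : ℕ, 1 ≤ j → (α j) (monomial e 1) ∈ Ysub l := fun l e he j hj =>
    alpha_mono_mem (α j) j hj (hα1 j hj) (fun k hk => hα2 j k hk) l e he
  have keyD : ∀ l : Option ℕ, ∀ e : ℕ →₀ ℕ, LevelCond l e → D (monomial e 1) ∈ Ysub l := by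
    intro l e he
    rw [deriv_mono]
    refine Submodule.sum_mem _ fun i _ => ?_
    show monomial (e - Finsupp.single i 1) ((e i : ZMod 2)) * D (X i) ∈ Ysub l
    rcases Nat.eq_zero_or_pos i with rfl | hi
    · rw [h0, mul_zero]; exact zero_mem _
    · have hDi : D (X i) = (X (i - 1)) ^ 2 := by
        cases i with
        | zero => omega
        | succ m => simpa using hs m
      have heq : monomial (e - Finsupp.single i 1) ((e i : ZMod 2)) * D (X i)
          = (α i) (monomial e 1) := by
        rw [alpha_mono (α i) i hi (hα1 i hi) (fun k hk => hα2 i k hk) e, hDi,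
          X_pow_eq_monomial, monomial_mul, mul_one, MvPolynomial.smul_monomial, smul_eq_mul,
          mul_one]
      rw [heq]
      exact key l e he i hi
  constructor
  · intro j hj l f hf
    refine Submodule.span_induction (fun p hp => ?_) (by simp) (fun x y _ _ hx hy => by
      rw [map_add]; exact add_mem hx hy) (fun c x _ hx => by
      rw [Derivation.map_smul]; exact Submodule.smul_mem _ _ hx) hf
    obtain ⟨e, he, rfl⟩ := hp
    exact key l e he j hj
  · intro l f hf
    refine Submodule.span_induction (fun p hp => ?_) (by simp) (fun x y _ _ hx hy => by
      rw [map_add]; exact add_mem hx hy) (fun c x _ hx => by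
      rw [Derivation.map_smul]; exact Submodule.smul_mem _ _ hx) hf
    obtain ⟨e, he, rfl⟩ := hp
    exact keyD l e he
end

section
/- Let X = Z_2[x_n : n ∈ Z, n ≠ 0] with differential ∂ the derivation determined by ∂x_{2k} = x_k^2 for k ≠ 0 and ∂x_{2k+1} = 0 for all k. Then the homology H(X) = ker ∂ / im ∂ is, as a Z_2-algebra, the quotient of the polynomial algebra on the classes x̄_j over all odd integers j by the relations x̄_j^2 = 0. In particular, H(X) has a Z_2-basis given by products x̄_{j_1} ··· x̄_{j_r} of classes with distinct odd indices. -/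
open MvPolynomial

/-- Nonzero integers, the index set of the variables `x_n` of `X`. -/
abbrev NZ := {n : ℤ // n ≠ 0}

/-- `X = Z_2[x_n : n ∈ ℤ, n ≠ 0]`. -/
abbrev Xpoly := MvPolynomial NZ (ZMod 2)

/-- The variable `x_m` (and `0` for the illegal index `m = 0`). -/
noncomputable def xv (m : ℤ) : Xpoly :=
  if h : m ≠ 0 then X ⟨m, h⟩ else 0

/-- A fermionic exponent vector: all exponents `≤ 1`, supported on odd indices.  The
corresponding monomials `x_{j_1} ⋯ x_{j_r}` (`j`'s odd and pairwise distinct) are the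
fermionic monomials. -/
def IsFermExp (e : NZ →₀ ℕ) : Prop :=
  ∀ n : NZ, e n ≤ 1 ∧ (e n ≠ 0 → Odd (n : ℤ))

/-- The span of the fermionic monomials, i.e. the set of fermionic polynomials. -/
noncomputable def FermSpan : Submodule (ZMod 2) Xpoly :=
  Submodule.span (ZMod 2) {p | ∃ e : NZ →₀ ℕ, IsFermExp e ∧ p = monomial e 1}

namespace Stmt10

abbrev Exp := (NZ →₀ ℕ)

lemma odd_ne_zero {m : ℤ} (h : Odd m) : m ≠ 0 := by
  rintro rfl; simp [Int.odd_iff] at h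

def v2 (n : ℤ) : ℕ := n.natAbs.factorization 2
def op (n : ℤ) : ℤ := n / 2 ^ v2 n

lemma two_pow_v2_dvd (n : ℤ) : (2 ^ v2 n : ℤ) ∣ n := by
  have h := Nat.ordProj_dvd n.natAbs 2
  have h2 : ((2 ^ v2 n : ℕ) : ℤ) ∣ ((n.natAbs : ℕ) : ℤ) := Int.natCast_dvd_natCast.mpr h
  rw [Int.dvd_natAbs] at h2
  simpa using h2

lemma op_spec (n : ℤ) : n = 2 ^ v2 n * op n := (Int.mul_ediv_cancel' (two_pow_v2_dvd n)).symm

lemma odd_op {n : ℤ} (h : n ≠ 0) : Odd (op n) := by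
  rw [← Int.not_even_iff_odd, even_iff_two_dvd]
  rintro ⟨m, hm⟩
  have hn : n = 2 ^ (v2 n + 1) * m := by
    calc n = 2 ^ v2 n * op n := op_spec n
    _ = 2 ^ v2 n * (2 * m) := by rw [hm]
    _ = 2 ^ (v2 n + 1) * m := by ring
  have hdvd : (2 : ℤ) ^ (v2 n + 1) ∣ n := ⟨m, hn⟩
  have hdvd2 : (2 : ℕ) ^ (v2 n + 1) ∣ n.natAbs := by
    have h3 := Int.natAbs_dvd_natAbs.mpr hdvd
    simpa [Int.natAbs_pow] using h3
  have h5 := (Nat.Prime.pow_dvd_iff_le_factorization Nat.prime_two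
    (Int.natAbs_ne_zero.mpr h)).mp hdvd2
  have h6 : v2 n + 1 ≤ v2 n := h5
  omega

lemma v2_eq {a : ℕ} {m : ℤ} (hm : Odd m) : v2 (2 ^ a * m) = a := by
  have hm0 : m ≠ 0 := odd_ne_zero hm
  have h1 : (2 ^ a * m).natAbs = 2 ^ a * m.natAbs := by
    rw [Int.natAbs_mul, Int.natAbs_pow]; rfl
  have hodd : ¬ (2 ∣ m.natAbs) := by
    have h4 : Odd m.natAbs := Int.natAbs_odd.mpr hm
    rw [Nat.odd_iff] at h4
    omega
  unfold v2
  rw [h1, Nat.factorization_mul (pow_ne_zero a two_ne_zero) (Int.natAbs_ne_zero.mpr hm0)]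
  simp [Nat.Prime.factorization_pow Nat.prime_two, Nat.factorization_eq_zero_of_not_dvd hodd]

lemma op_eq {a : ℕ} {m : ℤ} (hm : Odd m) : op (2 ^ a * m) = m := by
  unfold op
  rw [v2_eq hm, Int.mul_ediv_cancel_left _ (pow_ne_zero a (by norm_num))]

lemma v2_zero_of_odd {n : ℤ} (h : Odd n) : v2 n = 0 := by
  simpa using v2_eq (a := 0) (m := n) h

lemma odd_of_v2_zero {n : ℤ} (h0 : n ≠ 0) (h : v2 n = 0) : Odd n := by
  have := odd_op h0
  unfold op at this
  rwa [h, pow_zero, Int.ediv_one] at this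

lemma one_le_v2_iff {n : ℤ} (h0 : n ≠ 0) : 1 ≤ v2 n ↔ Even n := by
  constructor
  · intro h
    have : (2:ℤ) ∣ n := dvd_trans (dvd_pow_self 2 (by omega : v2 n ≠ 0)) (two_pow_v2_dvd n)
    exact even_iff_two_dvd.mpr this
  · intro h
    by_contra hc
    have hv : v2 n = 0 := by omega
    exact (Int.not_even_iff_odd.mpr (odd_of_v2_zero h0 hv)) h

lemma two_mul_eq (n : ℤ) : 2 * n = 2 ^ (v2 n + 1) * op n := by
  calc 2 * n = 2 * (2 ^ v2 n * op n) := by rw [← op_spec n]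
  _ = 2 ^ (v2 n + 1) * op n := by ring

lemma v2_two_mul {n : ℤ} (h0 : n ≠ 0) : v2 (2 * n) = v2 n + 1 := by
  rw [two_mul_eq n, v2_eq (odd_op h0)]

lemma op_two_mul {n : ℤ} (h0 : n ≠ 0) : op (2 * n) = op n := by
  rw [two_mul_eq n, op_eq (odd_op h0)]


/-! ### NZ-level structure -/

def dbl (n : NZ) : NZ := ⟨2 * n.1, mul_ne_zero two_ne_zero n.2⟩

def hf (n : NZ) : NZ :=
  if h : (2 : ℤ) ∣ n.1 then ⟨n.1 / 2, by
    intro h0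
    exact n.2 (by rw [← Int.mul_ediv_cancel' h, h0, mul_zero])⟩
  else n

def vv (n : NZ) : ℕ := v2 n.1
def code (n : NZ) : ℕ := Encodable.encode (op n.1)

lemma hf_coe {n : NZ} (h : (2:ℤ) ∣ n.1) : ((hf n : NZ) : ℤ) = n.1 / 2 := by
  unfold hf; rw [dif_pos h]

lemma hf_dbl (n : NZ) : hf (dbl n) = n := by
  have h : (2:ℤ) ∣ (dbl n).1 := ⟨n.1, rfl⟩
  apply Subtype.ext
  rw [hf_coe h]
  exact Int.mul_ediv_cancel_left n.1 two_ne_zero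

lemma dbl_hf {n : NZ} (h : (2:ℤ) ∣ n.1) : dbl (hf n) = n := by
  apply Subtype.ext
  show 2 * (hf n).1 = n.1
  rw [hf_coe h]
  exact Int.mul_ediv_cancel' h

lemma vv_dbl (n : NZ) : vv (dbl n) = vv n + 1 := v2_two_mul n.2

lemma code_dbl (n : NZ) : code (dbl n) = code n := by
  unfold code; rw [show ((dbl n : NZ) : ℤ) = 2 * n.1 from rfl, op_two_mul n.2]

lemma vv_hf {n : NZ} (h : (2:ℤ) ∣ n.1) : vv n = vv (hf n) + 1 := by
  conv_lhs => rw [← dbl_hf h]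
  exact vv_dbl (hf n)

lemma code_hf {n : NZ} (h : (2:ℤ) ∣ n.1) : code (hf n) = code n := by
  conv_rhs => rw [← dbl_hf h]
  exact (code_dbl (hf n)).symm

lemma eq_of_code_vv {m n : NZ} (hc : code m = code n) (hv : vv m = vv n) : m = n := by
  have hop : op m.1 = op n.1 := Encodable.encode_injective hc
  apply Subtype.ext
  rw [op_spec m.1, op_spec n.1]
  unfold vv at hv
  rw [hv, hop]

lemma one_le_vv_iff {n : NZ} : 1 ≤ vv n ↔ Even n.1 := one_le_v2_iff n.2

lemma odd_iff_vv {n : NZ} : Odd n.1 ↔ vv n = 0 := by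
  constructor
  · exact v2_zero_of_odd
  · exact odd_of_v2_zero n.2

lemma hf_ne {n : NZ} (h : (2:ℤ) ∣ n.1) : hf n ≠ n := by
  intro he
  have := vv_hf h
  rw [he] at this
  omega

lemma dbl_ne (n : NZ) : dbl n ≠ n := by
  intro he
  have := vv_dbl n
  rw [he] at this
  omega

lemma even_dbl (n : NZ) : Even ((dbl n : NZ) : ℤ) := ⟨n.1, two_mul n.1⟩

/-! ### Moves on exponent vectors -/

noncomputable def dmove (n : NZ) (e : Exp) : Exp := e - Finsupp.single n 1 + Finsupp.single (hf n) 2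
noncomputable def umove (n : NZ) (e : Exp) : Exp := e - Finsupp.single n 2 + Finsupp.single (dbl n) 1

lemma dmove_apply (n : NZ) (e : Exp) (x : NZ) :
    dmove n e x = e x - (if n = x then 1 else 0) + (if hf n = x then 2 else 0) := by
  unfold dmove
  rw [Finsupp.add_apply, Finsupp.tsub_apply, Finsupp.single_apply, Finsupp.single_apply]

lemma umove_apply (n : NZ) (e : Exp) (x : NZ) :
    umove n e x = e x - (if n = x then 2 else 0) + (if dbl n = x then 1 else 0) := by
  unfold umove
  rw [Finsupp.add_apply, Finsupp.tsub_apply, Finsupp.single_apply, Finsupp.single_apply]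


/-! ### The measure -/

open OrderDual in
noncomputable def mu0 (e : Exp) : ℕᵒᵈ →₀ ℕ :=
  e.sum fun n c => Finsupp.single (toDual (code n)) ((vv n + 2) * c)

noncomputable def mu (e : Exp) : Lex (ℕᵒᵈ →₀ ℕ) := toLex (mu0 e)

lemma mu0_add (e₁ e₂ : Exp) : mu0 (e₁ + e₂) = mu0 e₁ + mu0 e₂ :=
  Finsupp.sum_add_index' (fun n => by simp) (fun n c₁ c₂ => by rw [mul_add, Finsupp.single_add])

open OrderDual in
lemma mu0_single (n : NZ) (c : ℕ) :
    mu0 (Finsupp.single n c) = Finsupp.single (toDual (code n)) ((vv n + 2) * c) :=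
  Finsupp.sum_single_index (by simp)

lemma dmove_add_eq {n : NZ} {e : Exp} (hn : (2:ℤ) ∣ n.1) (he : 1 ≤ e n) :
    dmove n e + Finsupp.single n 1 = e + Finsupp.single (hf n) 2 := by
  ext x
  rw [Finsupp.add_apply, Finsupp.add_apply, dmove_apply, Finsupp.single_apply,
    Finsupp.single_apply]
  by_cases h1 : n = x
  · subst h1
    rw [if_pos rfl, if_neg (hf_ne hn)]
    omega
  · by_cases h2 : hf n = x
    · rw [if_neg h1, if_pos h2]
      omega
    · rw [if_neg h1, if_neg h2]
      omega

open OrderDual in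
lemma mu0_dmove {n : NZ} {e : Exp} (hn : (2:ℤ) ∣ n.1) (he : 1 ≤ e n) :
    mu0 (dmove n e) = mu0 e + Finsupp.single (toDual (code n)) (vv n) := by
  have h1 := congrArg mu0 (dmove_add_eq hn he)
  rw [mu0_add, mu0_add, mu0_single, mu0_single, code_hf hn] at h1
  have h2 : (vv (hf n) + 2) * 2 = (vv n + 2) * 1 + vv n := by
    have := vv_hf hn; omega
  rw [h2, Finsupp.single_add] at h1
  have h3 : mu0 (dmove n e) + Finsupp.single (toDual (code n)) ((vv n + 2) * 1) =
      (mu0 e + Finsupp.single (toDual (code n)) (vv n)) +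
        Finsupp.single (toDual (code n)) ((vv n + 2) * 1) := by
    rw [h1]; abel
  exact add_right_cancel h3

lemma lex_lt (a : ℕᵒᵈ →₀ ℕ) {k₁ k₂ : ℕᵒᵈ} {c₁ c₂ : ℕ}
    (h : (k₁ = k₂ ∧ c₁ < c₂) ∨ (k₂ < k₁ ∧ 0 < c₂)) :
    toLex (a + Finsupp.single k₁ c₁) < toLex (a + Finsupp.single k₂ c₂) := by
  have key : Finsupp.Lex (· < ·) (· < ·) (a + Finsupp.single k₁ c₁) (a + Finsupp.single k₂ c₂) := by
    rw [Finsupp.lex_def]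
    refine ⟨k₂, fun d hd => ?_, ?_⟩
    · have hd1 : k₁ ≠ d := by
        rcases h with ⟨rfl, _⟩ | ⟨hk, _⟩
        · exact (ne_of_lt hd).symm
        · exact (ne_of_lt (lt_trans hd hk)).symm
      have hd2 : k₂ ≠ d := (ne_of_lt hd).symm
      rw [Finsupp.add_apply, Finsupp.add_apply, Finsupp.single_apply, Finsupp.single_apply,
        if_neg hd1, if_neg hd2]
    · rw [Finsupp.add_apply, Finsupp.add_apply, Finsupp.single_apply, Finsupp.single_apply]
      rcases h with ⟨rfl, hc⟩ | ⟨hk, hc⟩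
      · split_ifs with hsplit
        · omega
        · exact absurd rfl hsplit
      · rw [if_neg (ne_of_gt hk), if_pos rfl]; omega
  exact key

open OrderDual in
lemma mu_dmove_lt {e : Exp} {n m : NZ} (hn2 : (2:ℤ) ∣ n.1) (hm2 : (2:ℤ) ∣ m.1)
    (hen : 1 ≤ e n) (hem : 1 ≤ e m)
    (h : (code m = code n ∧ vv m < vv n) ∨ code m < code n) :
    mu (dmove m e) < mu (dmove n e) := by
  unfold mu
  rw [mu0_dmove hm2 hem, mu0_dmove hn2 hen]
  apply lex_lt
  rcases h with ⟨hc, hv⟩ | hc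
  · exact Or.inl ⟨by rw [hc], hv⟩
  · refine Or.inr ⟨?_, ?_⟩
    · exact (toDual_lt_toDual (α := ℕ)).mpr hc
    · have : 1 ≤ vv n := one_le_vv_iff.mpr (even_iff_two_dvd.mpr hn2)
      omega


/-! ### The matching -/

def badAt (e : Exp) (n : NZ) : Prop := e n ≠ 0 ∧ (1 ≤ vv n ∨ 2 ≤ e n)

def TopAt (e : Exp) (n : NZ) : Prop := badAt e n ∧ ∀ m, badAt e m → code m ≤ code n

def DownAt (e : Exp) (n : NZ) : Prop :=
  TopAt e n ∧ 1 ≤ vv n ∧ Odd (e n) ∧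
  (∀ m, code m = code n → 1 ≤ vv m → Odd (e m) → vv m ≤ vv n) ∧
  (∀ m, code m = code n → 2 ≤ e m → vv m < vv n)

def UpAt (e : Exp) (n : NZ) : Prop :=
  TopAt e n ∧ 2 ≤ e n ∧
  (∀ m, code m = code n → 2 ≤ e m → vv m ≤ vv n) ∧
  (∀ m, code m = code n → 1 ≤ vv m → Odd (e m) → vv m ≤ vv n)

def TSet : Set Exp := {e | ∃ n, DownAt e n}

lemma DownAt.dvd {e : Exp} {n : NZ} (h : DownAt e n) : (2:ℤ) ∣ n.1 :=
  even_iff_two_dvd.mp (one_le_vv_iff.mp h.2.1)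

lemma DownAt.e_eq_one {e : Exp} {n : NZ} (h : DownAt e n) : e n = 1 := by
  have h5 := h.2.2.2.2 n rfl
  have : ¬ (2 ≤ e n) := fun hc => absurd (h5 hc) (lt_irrefl _)
  have hodd := h.2.2.1
  rw [Nat.odd_iff] at hodd
  omega

lemma down_up {e : Exp} {n : NZ} (h : DownAt e n) :
    UpAt (dmove n e) (hf n) ∧ umove (hf n) (dmove n e) = e := by
  have hdvd : (2:ℤ) ∣ n.1 := h.dvd
  have hen1 : e n = 1 := h.e_eq_one
  have hvn : 1 ≤ vv n := h.2.1
  have hvhf : vv n = vv (hf n) + 1 := vv_hf hdvd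
  have hchf : code (hf n) = code n := code_hf hdvd
  have hne : hf n ≠ n := hf_ne hdvd
  set s := dmove n e with hs
  have s_at_n : s n = 0 := by
    rw [hs, dmove_apply, if_pos rfl, if_neg hne]; omega
  have s_at_hf : s (hf n) = e (hf n) + 2 := by
    rw [hs, dmove_apply, if_neg (Ne.symm hne), if_pos rfl]; omega
  have s_else : ∀ x, x ≠ n → x ≠ hf n → s x = e x := by
    intro x h1 h2
    rw [hs, dmove_apply, if_neg (Ne.symm h1), if_neg (Ne.symm h2)]; omega
  have top : ∀ m, badAt s m → code m ≤ code (hf n) := by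
    intro m hm
    rw [hchf]
    by_cases h1 : m = n
    · subst h1; exact le_refl _
    by_cases h2 : m = hf n
    · subst h2; rw [hchf]
    · have he : s m = e m := s_else m h1 h2
      exact h.1.2 m ⟨he ▸ hm.1, he ▸ hm.2⟩
  constructor
  · refine ⟨⟨⟨by omega, Or.inr (by omega)⟩, top⟩, by omega, ?_, ?_⟩
    · -- cond3 : squares at or below hf n
      intro m hcm h2m
      by_cases h1 : m = n
      · subst h1; omega
      by_cases hh : m = hf n
      · subst hh; exact le_refl _
      · have he : s m = e m := s_else m h1 hh
        have := h.2.2.2.2 m (by rwa [hchf] at hcm) (by omega)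
        omega
    · -- cond4 : odds strictly below
      intro m hcm hvm hom
      by_cases h1 : m = n
      · subst h1; rw [s_at_n] at hom; simp [Nat.odd_iff] at hom
      by_cases hh : m = hf n
      · subst hh; exact le_refl _
      · have he : s m = e m := s_else m h1 hh
        rw [he] at hom
        have h4 := h.2.2.2.1 m (by rwa [hchf] at hcm) hvm hom
        have hne2 : vv m ≠ vv n := fun hv =>
          h1 (eq_of_code_vv (by rwa [hchf] at hcm) hv)
        omega
  · ext x
    rw [umove_apply, dbl_hf hdvd]
    by_cases h1 : x = n
    · subst h1
      rw [s_at_n, if_neg hne, if_pos rfl]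
      omega
    by_cases h2 : x = hf n
    · subst h2
      rw [s_at_hf, if_pos rfl, if_neg (Ne.symm h1)]
      omega
    · rw [s_else x h1 h2, if_neg (fun hc => h2 hc.symm), if_neg (fun hc => h1 hc.symm)]
      omega

lemma up_down {e : Exp} {n : NZ} (h : UpAt e n) :
    DownAt (umove n e) (dbl n) ∧ dmove (dbl n) (umove n e) = e := by
  have hen : 2 ≤ e n := h.2.1
  have hvd : vv (dbl n) = vv n + 1 := vv_dbl n
  have hcd : code (dbl n) = code n := code_dbl n
  have hne : dbl n ≠ n := dbl_ne n
  have e_dbl : e (dbl n) = 0 := by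
    by_contra hc
    rcases Nat.lt_or_ge (e (dbl n)) 2 with h1 | h1
    · have h2 : e (dbl n) = 1 := by omega
      have := h.2.2.2 (dbl n) hcd (by omega) (by rw [h2]; exact odd_one)
      omega
    · have := h.2.2.1 (dbl n) hcd h1
      omega
  set t := umove n e with ht
  have t_at_n : t n = e n - 2 := by
    rw [ht, umove_apply, if_pos rfl, if_neg hne]; omega
  have t_at_dbl : t (dbl n) = 1 := by
    rw [ht, umove_apply, if_neg (Ne.symm hne), if_pos rfl]; omega
  have t_else : ∀ x, x ≠ n → x ≠ dbl n → t x = e x := by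
    intro x h1 h2
    rw [ht, umove_apply, if_neg (Ne.symm h1), if_neg (Ne.symm h2)]; omega
  have top : ∀ m, badAt t m → code m ≤ code (dbl n) := by
    intro m hm
    rw [hcd]
    by_cases h1 : m = n
    · subst h1; exact le_refl _
    by_cases h2 : m = dbl n
    · subst h2; rw [hcd]
    · have he : t m = e m := t_else m h1 h2
      exact h.1.2 m ⟨he ▸ hm.1, he ▸ hm.2⟩
  constructor
  · refine ⟨⟨⟨by omega, Or.inl (by omega)⟩, top⟩, by omega, by rw [t_at_dbl]; exact odd_one,
      ?_, ?_⟩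
    · -- cond4 : odds at or below dbl n
      intro m hcm hvm hom
      by_cases h1 : m = n
      · subst h1; omega
      by_cases h2 : m = dbl n
      · subst h2; exact le_refl _
      · have he : t m = e m := t_else m h1 h2
        rw [he] at hom
        have := h.2.2.2 m (by rwa [hcd] at hcm) hvm hom
        omega
    · -- cond5 : squares strictly below dbl n
      intro m hcm h2m
      by_cases h1 : m = n
      · subst h1; omega
      by_cases h2 : m = dbl n
      · subst h2; rw [t_at_dbl] at h2m; omega
      · have he : t m = e m := t_else m h1 h2
        have := h.2.2.1 m (by rwa [hcd] at hcm) (by omega)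
        omega
  · ext x
    rw [dmove_apply, hf_dbl]
    by_cases h1 : x = dbl n
    · subst h1
      rw [t_at_dbl, if_pos rfl, if_neg (Ne.symm hne)]
      omega
    by_cases h2 : x = n
    · subst h2
      rw [t_at_n, if_neg (fun hc => h1 hc.symm), if_pos rfl]
      omega
    · rw [t_else x h2 h1, if_neg (fun hc => h1 hc.symm), if_neg (fun hc => h2 hc.symm)]
      omega

lemma upAt_unique {e : Exp} {m₁ m₂ : NZ} (h₁ : UpAt e m₁) (h₂ : UpAt e m₂) : m₁ = m₂ := by
  have b₁ : badAt e m₁ := ⟨by have := h₁.2.1; omega, Or.inr h₁.2.1⟩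
  have b₂ : badAt e m₂ := ⟨by have := h₂.2.1; omega, Or.inr h₂.2.1⟩
  have hc : code m₁ = code m₂ := le_antisymm (h₂.1.2 m₁ b₁) (h₁.1.2 m₂ b₂)
  have hv : vv m₁ = vv m₂ :=
    le_antisymm (h₂.2.2.1 m₁ hc h₁.2.1) (h₁.2.2.1 m₂ hc.symm h₂.2.1)
  exact eq_of_code_vv hc hv


lemma mu_lt_of_downAt {e : Exp} {n : NZ} (h : DownAt e n) {m : NZ} (hm2 : (2:ℤ) ∣ m.1)
    (hom : Odd (e m)) (hmn : m ≠ n) : mu (dmove m e) < mu (dmove n e) := by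
  have hvm1 : 1 ≤ vv m := one_le_vv_iff.mpr (even_iff_two_dvd.mpr hm2)
  have hm1 : 1 ≤ e m := by rw [Nat.odd_iff] at hom; omega
  have hcode : code m ≤ code n := h.1.2 m ⟨by omega, Or.inl hvm1⟩
  apply mu_dmove_lt h.dvd hm2 (by rw [h.e_eq_one]) hm1
  rcases eq_or_lt_of_le hcode with hc | hc
  · left
    refine ⟨hc, ?_⟩
    have h4 := h.2.2.2.1 m hc hvm1 hom
    have : vv m ≠ vv n := fun hv => hmn (eq_of_code_vv hc hv)
    omega
  · exact Or.inr hc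

lemma exists_up_or_down {e : Exp} (hnf : ¬ IsFermExp e) :
    (∃ n, DownAt e n) ∨ (∃ n, UpAt e n) := by
  classical
  have hbad : ∃ n, badAt e n := by
    unfold IsFermExp at hnf
    push_neg at hnf
    obtain ⟨n, hn⟩ := hnf
    by_cases h1 : e n ≤ 1
    · obtain ⟨hne, hodd⟩ := hn h1
      exact ⟨n, hne, Or.inl (one_le_vv_iff.mpr (Int.not_odd_iff_even.mp hodd))⟩
    · exact ⟨n, by omega, Or.inr (by omega)⟩
  set B := e.support.filter (fun n => 1 ≤ vv n ∨ 2 ≤ e n) with hB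
  have memB : ∀ n, n ∈ B ↔ badAt e n := by
    intro n
    rw [hB, Finset.mem_filter, Finsupp.mem_support_iff]
    exact Iff.rfl
  obtain ⟨n0, hn0⟩ := hbad
  have hBne : B.Nonempty := ⟨n0, (memB n0).mpr hn0⟩
  obtain ⟨nstar, hnstarB, hnstarmax⟩ := B.exists_max_image code hBne
  set K := code nstar with hK
  set S2 := B.filter (fun m => code m = K ∧ 2 ≤ e m) with hS2
  set S1 := B.filter (fun m => code m = K ∧ 1 ≤ vv m ∧ Odd (e m)) with hS1
  have topOf : ∀ d : NZ, code d = K → badAt e d → TopAt e d := by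
    intro d hcd hbd
    refine ⟨hbd, fun m hm => ?_⟩
    rw [hcd]
    exact hnstarmax m ((memB m).mpr hm)
  have mkDown : ∀ d : NZ, code d = K → 1 ≤ vv d → Odd (e d) →
      (∀ m ∈ S1, vv m ≤ vv d) → (∀ m ∈ S2, vv m < vv d) → DownAt e d := by
    intro d hcd hvd hod hmax1 hmax2
    have hd1 : e d ≠ 0 := by rw [Nat.odd_iff] at hod; omega
    refine ⟨topOf d hcd ⟨hd1, Or.inl hvd⟩, hvd, hod, ?_, ?_⟩
    · intro m hcm hvm hom
      refine hmax1 m ?_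
      rw [hS1, Finset.mem_filter]
      have hm0 : e m ≠ 0 := by rw [Nat.odd_iff] at hom; omega
      exact ⟨(memB m).mpr ⟨hm0, Or.inl hvm⟩, by rw [hcm, hcd], hvm, hom⟩
    · intro m hcm h2m
      refine hmax2 m ?_
      rw [hS2, Finset.mem_filter]
      exact ⟨(memB m).mpr ⟨by omega, Or.inr h2m⟩, by rw [hcm, hcd], h2m⟩
  have mkUp : ∀ u : NZ, code u = K → 2 ≤ e u →
      (∀ m ∈ S2, vv m ≤ vv u) → (∀ m ∈ S1, vv m ≤ vv u) → UpAt e u := by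
    intro u hcu h2u hmax2 hmax1
    refine ⟨topOf u hcu ⟨by omega, Or.inr h2u⟩, h2u, ?_, ?_⟩
    · intro m hcm h2m
      refine hmax2 m ?_
      rw [hS2, Finset.mem_filter]
      exact ⟨(memB m).mpr ⟨by omega, Or.inr h2m⟩, by rw [hcm, hcu], h2m⟩
    · intro m hcm hvm hom
      refine hmax1 m ?_
      rw [hS1, Finset.mem_filter]
      have hm0 : e m ≠ 0 := by rw [Nat.odd_iff] at hom; omega
      exact ⟨(memB m).mpr ⟨hm0, Or.inl hvm⟩, by rw [hcm, hcu], hvm, hom⟩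
  have hstar : nstar ∈ S1 ∪ S2 := by
    have hb := (memB nstar).mp hnstarB
    rcases Nat.lt_or_ge (e nstar) 2 with h1 | h1
    · have he1 : e nstar = 1 := by have := hb.1; omega
      have hv : 1 ≤ vv nstar := by
        rcases hb.2 with h | h
        · exact h
        · omega
      apply Finset.mem_union_left
      rw [hS1, Finset.mem_filter]
      exact ⟨hnstarB, rfl, hv, by rw [he1]; exact odd_one⟩
    · apply Finset.mem_union_right
      rw [hS2, Finset.mem_filter]
      exact ⟨hnstarB, rfl, h1⟩
  by_cases hS1ne : S1.Nonempty
  · obtain ⟨d, hdS1, hdmax⟩ := S1.exists_max_image vv hS1ne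
    have hdprops := (Finset.mem_filter.mp (hS1 ▸ hdS1)).2
    by_cases hS2ne : S2.Nonempty
    · obtain ⟨u, huS2, humax⟩ := S2.exists_max_image vv hS2ne
      have huprops := (Finset.mem_filter.mp (hS2 ▸ huS2)).2
      rcases Nat.lt_or_ge (vv u) (vv d) with hcomp | hcomp
      · exact Or.inl ⟨d, mkDown d hdprops.1 hdprops.2.1 hdprops.2.2 hdmax
          (fun m hm => lt_of_le_of_lt (humax m hm) hcomp)⟩
      · exact Or.inr ⟨u, mkUp u huprops.1 huprops.2 humax
          (fun m hm => le_trans (hdmax m hm) hcomp)⟩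
    · exact Or.inl ⟨d, mkDown d hdprops.1 hdprops.2.1 hdprops.2.2 hdmax
        (fun m hm => absurd ⟨m, hm⟩ hS2ne)⟩
  · have hstar2 : nstar ∈ S2 := by
      rcases Finset.mem_union.mp hstar with h | h
      · exact absurd ⟨nstar, h⟩ hS1ne
      · exact h
    have hprops := (Finset.mem_filter.mp (hS2 ▸ hstar2)).2
    obtain ⟨u, huS2, humax⟩ := S2.exists_max_image vv ⟨nstar, hstar2⟩
    have huprops := (Finset.mem_filter.mp (hS2 ▸ huS2)).2
    exact Or.inr ⟨u, mkUp u huprops.1 huprops.2 humax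
      (fun m hm => absurd ⟨m, hm⟩ hS1ne)⟩


/-! ### Algebra: support submodules and the explicit derivation -/

lemma xpoly_add_self (a : Xpoly) : a + a = 0 := by
  have h : a + a = ((1 : ZMod 2) + 1) • a := by rw [add_smul, one_smul]
  rw [h, show (1 : ZMod 2) + 1 = 0 by decide, zero_smul]

noncomputable def suppSub (P : Set Exp) : Submodule (ZMod 2) Xpoly where
  carrier := {p | ∀ d ∈ p.support, d ∈ P}
  add_mem' := by
    intro p q hp hq d hd
    rcases Finset.mem_union.mp (MvPolynomial.support_add hd) with h | h
    exacts [hp d h, hq d h]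
  zero_mem' := by
    intro d hd
    simp at hd
  smul_mem' := by
    intro c p hp d hd
    exact hp d (MvPolynomial.support_smul hd)

lemma mem_suppSub {P : Set Exp} {p : Xpoly} : p ∈ suppSub P ↔ ∀ d ∈ p.support, d ∈ P :=
  Iff.rfl

lemma monomial_mem_suppSub {P : Set Exp} {e : Exp} {c : ZMod 2} (h : e ∈ P) :
    (monomial e c : Xpoly) ∈ suppSub P := by
  intro d hd
  rw [MvPolynomial.support_monomial] at hd
  split_ifs at hd
  · simp at hd
  · rw [Finset.mem_singleton] at hd
    subst hd
    exact h

lemma mem_submodule_of_support (S : Submodule (ZMod 2) Xpoly) (p : Xpoly)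
    (h : ∀ d ∈ p.support, (monomial d 1 : Xpoly) ∈ S) : p ∈ S := by
  have hrw : p = ∑ d ∈ p.support, (coeff d p) • (monomial d 1 : Xpoly) := by
    conv_lhs => rw [MvPolynomial.as_sum p]
    apply Finset.sum_congr rfl
    intro d _
    rw [MvPolynomial.smul_monomial, smul_eq_mul, mul_one]
  rw [hrw]
  exact Submodule.sum_mem S fun d hd => Submodule.smul_mem S _ (h d hd)

lemma monomial_mem_fermSpan {e : Exp} (h : IsFermExp e) : (monomial e 1 : Xpoly) ∈ FermSpan :=
  Submodule.subset_span ⟨e, h, rfl⟩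

lemma fermSpan_le : FermSpan ≤ suppSub {e | IsFermExp e} := by
  rw [FermSpan, Submodule.span_le]
  rintro p ⟨e, he, rfl⟩
  exact monomial_mem_suppSub he

noncomputable def Dd : Derivation (ZMod 2) Xpoly Xpoly :=
  mkDerivation _ (fun n : NZ => if (2:ℤ) ∣ n.1 then X (hf n) ^ 2 else 0)

lemma Dd_monomial (e : Exp) :
    Dd (monomial e 1) = ∑ n ∈ e.support.filter (fun n => (2:ℤ) ∣ n.1),
      ((e n : ZMod 2)) • (monomial (dmove n e) 1 : Xpoly) := by
  classical
  rw [Dd, mkDerivation_monomial, one_smul, Finsupp.sum,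
    ← Finset.sum_filter_add_sum_filter_not e.support (fun n => (2:ℤ) ∣ n.1)]
  have h2 : ∀ n ∈ e.support.filter (fun n => ¬ (2:ℤ) ∣ n.1),
      (monomial (e - Finsupp.single n 1) ((e n : ZMod 2)) •
        (if (2:ℤ) ∣ n.1 then (X (hf n) : Xpoly) ^ 2 else 0)) = 0 := by
    intro n hn
    rw [if_neg (Finset.mem_filter.mp hn).2, smul_zero]
  rw [Finset.sum_eq_zero h2, add_zero]
  apply Finset.sum_congr rfl
  intro n hn
  rw [if_pos (Finset.mem_filter.mp hn).2, MvPolynomial.X_pow_eq_monomial, smul_eq_mul,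
    MvPolynomial.monomial_mul, mul_one, MvPolynomial.smul_monomial, smul_eq_mul, mul_one]
  rfl

lemma Dd_ferm {e : Exp} (h : IsFermExp e) : Dd (monomial e 1) = 0 := by
  rw [Dd_monomial]
  apply Finset.sum_eq_zero
  intro n hn
  obtain ⟨hsupp, hdvd⟩ := Finset.mem_filter.mp hn
  have hodd := (h n).2 (Finsupp.mem_support_iff.mp hsupp)
  exact absurd (even_iff_two_dvd.mpr hdvd) (Int.not_even_iff_odd.mpr hodd)

lemma Dd_fermSpan {p : Xpoly} (h : p ∈ FermSpan) : Dd p = 0 := by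
  induction h using Submodule.span_induction with
  | mem x hx =>
    obtain ⟨e, he, rfl⟩ := hx
    exact Dd_ferm he
  | zero => exact map_zero _
  | add x y _ _ hx hy => rw [map_add, hx, hy, add_zero]
  | smul c x _ hx => rw [Derivation.map_smul, hx, smul_zero]

def SqSet : Set Exp := {d | ∃ n, 2 ≤ d n}

lemma Dd_mem_sq (p : Xpoly) : Dd p ∈ suppSub SqSet := by
  have hrw : p = ∑ d ∈ p.support, (coeff d p) • (monomial d 1 : Xpoly) := by
    conv_lhs => rw [MvPolynomial.as_sum p]
    exact Finset.sum_congr rfl fun d _ => by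
      rw [MvPolynomial.smul_monomial, smul_eq_mul, mul_one]
  rw [hrw, map_sum]
  apply Submodule.sum_mem
  intro d _
  rw [Derivation.map_smul]
  apply Submodule.smul_mem
  rw [Dd_monomial]
  apply Submodule.sum_mem
  intro n hn
  obtain ⟨_, hdvd⟩ := Finset.mem_filter.mp hn
  apply Submodule.smul_mem
  apply monomial_mem_suppSub
  refine ⟨hf n, ?_⟩
  rw [dmove_apply, if_neg (fun hc => hf_ne hdvd hc.symm), if_pos rfl]
  omega

lemma Dd_Dd (p : Xpoly) : Dd (Dd p) = 0 := by
  induction p using MvPolynomial.induction_on with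
  | C a =>
    rw [← MvPolynomial.algebraMap_eq, Derivation.map_algebraMap, map_zero]
  | add p q hp hq =>
    rw [map_add, map_add, hp, hq, add_zero]
  | mul_X p i hp =>
    have hXi : Dd (Dd (X i)) = 0 := by
      rw [Dd, mkDerivation_X]
      split_ifs with h
      · rw [sq, Derivation.leibniz]
        simp only [smul_eq_mul]
        exact xpoly_add_self _
      · exact map_zero _
    rw [Derivation.leibniz, map_add]
    simp only [smul_eq_mul, Derivation.leibniz, hp, hXi, mul_zero, zero_add, add_zero]
    rw [mul_comm (Dd (X i)) (Dd p)]
    exact xpoly_add_self _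


/-! ### Lemma B : Dd is injective on the span of T-monomials -/

lemma cast_eq_zero_of_not_odd {k : ℕ} (h : ¬ Odd k) : (k : ZMod 2) = 0 := by
  rw [ZMod.natCast_eq_zero_iff]
  rw [Nat.odd_iff] at h
  omega

open scoped Classical in
noncomputable def wit (e : Exp) : NZ :=
  if h : ∃ n, DownAt e n then h.choose else ⟨1, one_ne_zero⟩

open scoped Classical in
lemma wit_spec {e : Exp} (h : e ∈ TSet) : DownAt e (wit e) := by
  have h' : ∃ n, DownAt e n := h
  rw [wit, dif_pos h']
  exact h'.choose_spec

noncomputable def lead (e : Exp) : Exp := dmove (wit e) e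

lemma lead_inj {e₁ e₂ : Exp} (h₁ : e₁ ∈ TSet) (h₂ : e₂ ∈ TSet) (h : lead e₁ = lead e₂) :
    e₁ = e₂ := by
  obtain ⟨hu₁, hr₁⟩ := down_up (wit_spec h₁)
  obtain ⟨hu₂, hr₂⟩ := down_up (wit_spec h₂)
  have h' : dmove (wit e₁) e₁ = dmove (wit e₂) e₂ := h
  rw [h'] at hu₁
  have heq := upAt_unique hu₁ hu₂
  calc e₁ = umove (hf (wit e₁)) (dmove (wit e₁) e₁) := hr₁.symm
  _ = umove (hf (wit e₂)) (dmove (wit e₂) e₂) := by rw [heq, h']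
  _ = e₂ := hr₂

lemma dmove_ne {e : Exp} {m n : NZ} (hm : (2:ℤ) ∣ m.1) (hn : (2:ℤ) ∣ n.1)
    (hem : 1 ≤ e m) (hmn : m ≠ n) : dmove m e ≠ dmove n e := by
  intro hc
  have h1 := DFunLike.congr_fun hc m
  rw [dmove_apply, dmove_apply, if_pos rfl, if_neg (hf_ne hm),
    if_neg (fun h => hmn h.symm)] at h1
  by_cases h2 : hf n = m
  · rw [if_pos h2] at h1; omega
  · rw [if_neg h2] at h1; omega

lemma coeff_Dd_monomial_self {t : Exp} (ht : t ∈ TSet) :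
    coeff (lead t) (Dd (monomial t 1)) = 1 := by
  classical
  have hd := wit_spec ht
  rw [Dd_monomial, MvPolynomial.coeff_sum]
  have hmem : wit t ∈ t.support.filter (fun n => (2:ℤ) ∣ n.1) := by
    rw [Finset.mem_filter, Finsupp.mem_support_iff, hd.e_eq_one]
    exact ⟨one_ne_zero, hd.dvd⟩
  have hlead : dmove (wit t) t = lead t := rfl
  rw [Finset.sum_eq_single (wit t)]
  · rw [MvPolynomial.coeff_smul, MvPolynomial.coeff_monomial, if_pos hlead, hd.e_eq_one]
    norm_num
  · intro n hn hne
    obtain ⟨hnsupp, hn2⟩ := Finset.mem_filter.mp hn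
    rw [MvPolynomial.coeff_smul, MvPolynomial.coeff_monomial,
      if_neg (show ¬ (dmove n t = lead t) from
        dmove_ne hn2 hd.dvd (Nat.one_le_iff_ne_zero.mpr (Finsupp.mem_support_iff.mp hnsupp)) hne),
      smul_zero]
  · intro hc
    exact absurd hmem hc

lemma tspan_inj {p : Xpoly} (hp : p ∈ suppSub TSet) (hD : Dd p = 0) : p = 0 := by
  classical
  by_contra hne
  have hsupp_ne : p.support.Nonempty :=
    Finset.nonempty_iff_ne_empty.mpr (fun hc => hne (MvPolynomial.support_eq_empty.mp hc))
  obtain ⟨t₀, ht₀supp, ht₀max⟩ := p.support.exists_max_image (fun t => mu (lead t)) hsupp_ne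
  have ht₀T : t₀ ∈ TSet := hp t₀ ht₀supp
  set d₀ := lead t₀ with hd₀
  have hkey : coeff d₀ (Dd p) = coeff t₀ p := by
    have hrw : p = ∑ t ∈ p.support, (coeff t p) • (monomial t 1 : Xpoly) := by
      conv_lhs => rw [MvPolynomial.as_sum p]
      exact Finset.sum_congr rfl fun t _ => by
        rw [MvPolynomial.smul_monomial, smul_eq_mul, mul_one]
    conv_lhs => rw [hrw]
    rw [map_sum, MvPolynomial.coeff_sum]
    have hterm : ∀ t ∈ p.support,
        coeff d₀ (Dd ((coeff t p) • monomial t 1)) = if t = t₀ then coeff t₀ p else 0 := by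
      intro t htsupp
      have htT : t ∈ TSet := hp t htsupp
      rw [Derivation.map_smul, MvPolynomial.coeff_smul]
      by_cases hteq : t = t₀
      · subst hteq
        rw [if_pos rfl, coeff_Dd_monomial_self htT]
        norm_num
      · rw [if_neg hteq]
        have hzero : coeff d₀ (Dd (monomial t 1)) = 0 := by
          rw [Dd_monomial, MvPolynomial.coeff_sum]
          apply Finset.sum_eq_zero
          intro n hn
          obtain ⟨hnsupp, hn2⟩ := Finset.mem_filter.mp hn
          rw [MvPolynomial.coeff_smul, MvPolynomial.coeff_monomial]
          by_cases hcast : Odd (t n)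
          · rw [if_neg, smul_zero]
            intro hc
            by_cases hwt : n = wit t
            · subst hwt
              exact hteq (lead_inj htT ht₀T hc)
            · have hlt := mu_lt_of_downAt (wit_spec htT) hn2 hcast hwt
              rw [show dmove (wit t) t = lead t from rfl] at hlt
              rw [hc] at hlt
              exact absurd (lt_of_lt_of_le hlt (ht₀max t htsupp)) (lt_irrefl _)
          · rw [cast_eq_zero_of_not_odd hcast, zero_smul]
        rw [hzero, smul_zero]
    rw [Finset.sum_congr rfl hterm, Finset.sum_ite_eq' p.support t₀ (fun _ => coeff t₀ p),
      if_pos ht₀supp]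
  rw [hD] at hkey
  simp only [MvPolynomial.coeff_zero] at hkey
  exact (Finsupp.mem_support_iff.mp ht₀supp) hkey.symm


/-! ### Lemma A : every monomial is ferm + T-span + boundary -/

noncomputable def PSub : Submodule (ZMod 2) Xpoly :=
  FermSpan ⊔ suppSub TSet ⊔ LinearMap.range (Dd.toLinearMap)

lemma monomial_mem_PSub (e : Exp) : (monomial e 1 : Xpoly) ∈ PSub := by
  classical
  have wf : WellFounded (fun e₁ e₂ : Exp => mu e₁ < mu e₂) :=
    InvImage.wf mu (IsWellFounded.wf)
  induction e using wf.induction with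
  | _ x IH =>
  by_cases hferm : IsFermExp x
  · exact Submodule.mem_sup_left (Submodule.mem_sup_left (monomial_mem_fermSpan hferm))
  by_cases hT : x ∈ TSet
  · exact Submodule.mem_sup_left (Submodule.mem_sup_right (monomial_mem_suppSub hT))
  rcases exists_up_or_down hferm with hdown | ⟨n, hup⟩
  · exact absurd hdown hT
  obtain ⟨hdownt, hrec⟩ := up_down hup
  set t := umove n x with htdef
  have hform := Dd_monomial t
  have hmem_dbl : dbl n ∈ t.support.filter (fun m => (2:ℤ) ∣ m.1) := by
    rw [Finset.mem_filter, Finsupp.mem_support_iff, hdownt.e_eq_one]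
    exact ⟨one_ne_zero, even_iff_two_dvd.mp (even_dbl n)⟩
  rw [← Finset.sum_erase_add _ _ hmem_dbl, hdownt.e_eq_one, hrec, Nat.cast_one, one_smul]
    at hform
  have hx : (monomial x 1 : Xpoly) = Dd (monomial t 1) +
      ∑ m ∈ (t.support.filter (fun m => (2:ℤ) ∣ m.1)).erase (dbl n),
        ((t m : ZMod 2)) • (monomial (dmove m t) 1 : Xpoly) := by
    rw [hform, add_right_comm, xpoly_add_self, zero_add]
  rw [hx]
  apply Submodule.add_mem
  · exact Submodule.mem_sup_right (LinearMap.mem_range.mpr ⟨monomial t 1, rfl⟩)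
  · have hsplit : ∀ y ∈ (t.support.filter (fun m => (2:ℤ) ∣ m.1)).erase (dbl n),
        ((t y : ZMod 2)) • (monomial (dmove y t) 1 : Xpoly) ≠ 0 → Odd (t y) := by
      intro y _ hne0
      by_contra hc
      rw [cast_eq_zero_of_not_odd hc, zero_smul] at hne0
      exact hne0 rfl
    rw [← Finset.sum_filter_of_ne hsplit]
    apply Submodule.sum_mem
    intro m hm
    obtain ⟨hm', hmodd⟩ := Finset.mem_filter.mp hm
    obtain ⟨hmne, hm''⟩ := Finset.mem_erase.mp hm'
    obtain ⟨hmsupp, hm2⟩ := Finset.mem_filter.mp hm''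
    apply Submodule.smul_mem
    apply IH
    have hlt := mu_lt_of_downAt hdownt hm2 hmodd hmne
    rwa [hrec] at hlt


end Stmt10

open Stmt10

/-- For the derivation `∂` on `X` with `∂ x_{2k} = x_k^2` (`k ≠ 0`) and `∂ x_{2k+1} = 0`:
every cycle is, modulo boundaries, equal to a unique fermionic polynomial (so `H(X)` has
`Z_2`-basis the fermionic monomials), and the square of each odd-index class is a
boundary (so `H(X)` is the polynomial algebra on the classes `x̄_j`, `j` odd, modulo
`x̄_j^2 = 0`). -/
theorem stmt10 (D : Derivation (ZMod 2) Xpoly Xpoly)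
    (heven : ∀ k : ℤ, k ≠ 0 → D (xv (2 * k)) = (xv k) ^ 2)
    (hodd : ∀ k : ℤ, D (xv (2 * k + 1)) = 0) :
    (∀ p : Xpoly, D p = 0 →
      ∃! r : Xpoly, r ∈ FermSpan ∧ ∃ q : Xpoly, p = r + D q) ∧
    (∀ j : ℤ, Odd j → ∃ q : Xpoly, (xv j) ^ 2 = D q) := by
  have hDeq : D = Dd := by
    apply derivation_ext
    intro i
    by_cases h2 : (2:ℤ) ∣ i.1
    · have hm : i = dbl (hf i) := (dbl_hf h2).symm
      rw [hm]
      have hxv : X (dbl (hf i)) = xv (2 * (hf i).1) := by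
        rw [xv, dif_pos (mul_ne_zero two_ne_zero (hf i).2)]
        rfl
      rw [hxv, heven (hf i).1 (hf i).2, ← hxv, Dd, mkDerivation_X]
      split_ifs with hcond
      · rw [hf_dbl]
        congr 1
        rw [xv, dif_pos (hf i).2]
      · exact absurd ⟨(hf i).1, rfl⟩ hcond
    · have hodd' : Odd i.1 := Int.not_even_iff_odd.mp (fun he => h2 (even_iff_two_dvd.mp he))
      obtain ⟨k, hk⟩ := hodd'
      have hX : X i = xv (2 * k + 1) := by
        rw [xv, dif_pos (show (2 * k + 1 : ℤ) ≠ 0 from hk ▸ i.2)]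
        exact congrArg X (Subtype.ext hk)
      rw [hX, hodd k, ← hX, Dd, mkDerivation_X, if_neg h2]
  subst hDeq
  constructor
  · intro p hp
    have hmem : p ∈ PSub := mem_submodule_of_support PSub p (fun d _ => monomial_mem_PSub d)
    rw [PSub] at hmem
    rcases Submodule.mem_sup.mp hmem with ⟨y, hy, z, hz, hyz⟩
    rcases Submodule.mem_sup.mp hy with ⟨f, hfF, t, htT, hft⟩
    obtain ⟨q, hq⟩ := LinearMap.mem_range.mp hz
    have hpeq : p = f + t + Dd q := by
      rw [← hyz, ← hft, ← hq]
      rfl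
    have hDt : Dd t = 0 := by
      have h1 : (0 : Xpoly) = Dd f + Dd t + Dd (Dd q) := by
        rw [← hp, hpeq, map_add, map_add]
      rw [Dd_fermSpan hfF, Dd_Dd, zero_add, add_zero] at h1
      exact h1.symm
    have ht0 : t = 0 := tspan_inj htT hDt
    refine ⟨f, ⟨hfF, ⟨q, by rw [hpeq, ht0, add_zero]⟩⟩, ?_⟩
    rintro y' ⟨hy'F, q', hq'⟩
    have hpf : p = f + Dd q := by rw [hpeq, ht0, add_zero]
    have hdiff : y' - f = Dd (q - q') := by
      rw [map_sub]
      have h3 : f + Dd q = y' + Dd q' := by rw [← hpf, ← hq']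
      have h4 : y' - f = Dd q - Dd q' := by linear_combination -h3
      exact h4
    have hF := fermSpan_le (Submodule.sub_mem _ hy'F hfF)
    have hS : (y' - f) ∈ suppSub SqSet := by
      rw [hdiff]
      exact Dd_mem_sq (q - q')
    have hzero : (y' - f).support = ∅ := by
      by_contra hne'
      obtain ⟨d, hd⟩ := Finset.nonempty_iff_ne_empty.mpr hne'
      obtain ⟨nn, hnn⟩ := hS d hd
      have h5 := (hF d hd) nn
      omega
    exact sub_eq_zero.mp (MvPolynomial.support_eq_empty.mp hzero)
  · intro j hj
    exact ⟨xv (2 * j), (heven j (odd_ne_zero hj)).symm⟩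
end

section
/- In the chain complex A_+ ⊗ X (free X-module on a_{1/2}, a_{3/2}, ... with ∂a_{n-1/2} = Σ_{i=1}^{n-1} a_{i-1/2} x_{n-i} and the Leibniz rule), every cycle f is homologous to an element of the form a_{1/2} · p where p ∈ X is a clean polynomial (a Z_2-linear combination of products of distinct odd-indexed variables, none equal to x_1); that is, there exist such p and some g ∈ A_+ ⊗ X with f = a_{1/2} p + ∂g. -/
open MvPolynomial

/-- `A_+ ⊗ X`, the free `X`-module with basis `a_{1/2}, a_{3/2}, ...`; index `m : ℕ`
stands for `a_{m + 1/2}` (so index `0` is `a_{1/2}`). -/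
abbrev AX := ℕ →₀ Xpoly

/-- A clean exponent vector: all exponents `≤ 1`, supported on odd indices `≠ 1`.  The
corresponding monomials are products of distinct odd-indexed variables, none equal to
`x_1`. -/
def IsCleanExp (e : NZ →₀ ℕ) : Prop :=
  ∀ n : NZ, e n ≤ 1 ∧ (e n ≠ 0 → Odd (n : ℤ) ∧ (n : ℤ) ≠ 1)

/-- The span of clean monomials, i.e. the set of clean polynomials. -/
noncomputable def CleanSpan : Submodule (ZMod 2) Xpoly :=
  Submodule.span (ZMod 2) {p | ∃ e : NZ →₀ ℕ, IsCleanExp e ∧ p = monomial e 1}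

namespace Aux14


abbrev Exp := NZ →₀ ℕ

def one1 : NZ := ⟨1, one_ne_zero⟩

def dbl (k : NZ) : NZ := ⟨2 * k.1, mul_ne_zero two_ne_zero k.2⟩

noncomputable def hlf (n : NZ) : NZ := if h : n.1 / 2 ≠ 0 then ⟨n.1 / 2, h⟩ else one1

def ord (k : NZ) : ℕ := 2 * k.1.natAbs + if k.1 < 0 then 1 else 0

lemma ord_inj {j k : NZ} (h : ord j = ord k) : j = k := by
  unfold ord at h
  apply Subtype.ext
  rcases lt_or_ge j.1 0 with hj | hj <;> rcases lt_or_ge k.1 0 with hk | hk <;>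
    simp only [if_pos, if_neg, hj, hk, not_lt] at h <;> omega

lemma ord_lt_dbl (k : NZ) : ord k < ord (dbl k) := by
  have h2 : k.1 ≠ 0 := k.2
  unfold ord dbl
  simp only
  split_ifs <;> omega

lemma dbl_ne (k : NZ) : dbl k ≠ k := by
  intro h
  exact absurd (congrArg ord h) (ne_of_gt (ord_lt_dbl k))

lemma hlf_dbl (k : NZ) : hlf (dbl k) = k := by
  have h : (2 * k.1) / 2 = k.1 := Int.mul_ediv_cancel_left _ two_ne_zero
  simp only [hlf, dbl, h]
  rw [dif_pos k.2]

lemma dbl_hlf {n : NZ} (h : Even n.1) : dbl (hlf n) = n := by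
  obtain ⟨t, ht⟩ := h
  have h2 : n.1 / 2 = t := by omega
  have hne : t ≠ 0 := by have := n.2; omega
  apply Subtype.ext
  simp only [hlf, h2, hne, dif_pos, ne_eq, not_false_iff, dbl]
  omega

lemma even_dbl (k : NZ) : Even (dbl k).1 := ⟨k.1, by simp [dbl]; ring⟩

def triv (e : Exp) (k : NZ) : Prop := e k ≤ 1 ∧ Even (e (dbl k))

lemma exists_min (e : Exp) (h : ∃ k, ¬ triv e k) :
    ∃ k, ¬ triv e k ∧ ∀ j, ¬ triv e j → ord k ≤ ord j := by
  classical
  have hN : ∃ N, ∃ k, ¬ triv e k ∧ ord k = N := ⟨ord h.choose, h.choose, h.choose_spec, rfl⟩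
  obtain ⟨k, hk, hke⟩ := Nat.find_spec hN
  exact ⟨k, hk, fun j hj => by rw [hke]; exact Nat.find_min' hN ⟨j, hj, rfl⟩⟩

noncomputable def kst (e : Exp) (h : ∃ k, ¬ triv e k) : NZ := (exists_min e h).choose

lemma kst_bad (e : Exp) (h : ∃ k, ¬ triv e k) : ¬ triv e (kst e h) :=
  (exists_min e h).choose_spec.1

lemma kst_min (e : Exp) (h : ∃ k, ¬ triv e k) (j : NZ) (hj : ¬ triv e j) :
    ord (kst e h) ≤ ord j := (exists_min e h).choose_spec.2 j hj

lemma kst_eq {e : Exp} (h : ∃ k, ¬ triv e k) {k : NZ} (hk : ¬ triv e k)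
    (hmin : ∀ j, ord j < ord k → triv e j) : kst e h = k := by
  have h1 := kst_min e h k hk
  have h2 : ¬ ord (kst e h) < ord k := fun hl => kst_bad e h (hmin _ hl)
  exact ord_inj (le_antisymm h1 (not_lt.1 h2))

-- char 2 helpers
lemma addself {M : Type*} [AddCommMonoid M] [Module (ZMod 2) M] (x : M) : x + x = 0 := by
  have h : (2 : ZMod 2) = 0 := rfl
  calc x + x = (2 : ZMod 2) • x := (two_smul _ x).symm
    _ = 0 := by rw [h, zero_smul]

lemma eq_of_addeq {M : Type*} [AddCommMonoid M] [Module (ZMod 2) M] {x y : M}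
    (h : x + y = 0) : x = y := by
  have := congrArg (· + y) h
  simpa [add_assoc, addself] using this

-- value of xv on coords
lemma xv_coe (i : NZ) : xv i.1 = X i := by
  rw [xv, dif_pos i.2]

lemma natCast_odd {n : ℕ} (h : Odd n) : (n : ZMod 2) = 1 := by
  obtain ⟨t, ht⟩ := h
  subst ht
  push_cast
  have h2 : (2 : ZMod 2) = 0 := rfl
  rw [h2]
  ring

lemma natCast_even {n : ℕ} (h : Even n) : (n : ZMod 2) = 0 := by
  obtain ⟨t, ht⟩ := h
  subst ht
  push_cast
  have h2 : (2 : ZMod 2) = 0 := rfl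
  rw [← two_mul, h2, zero_mul]

section D
variable (D : Derivation (ZMod 2) Xpoly Xpoly)

lemma DX (heven : ∀ k : ℤ, k ≠ 0 → D (xv (2 * k)) = (xv k) ^ 2)
    (hodd : ∀ k : ℤ, D (xv (2 * k + 1)) = 0) (i : NZ) : D (X i) = if Even i.1 then X (hlf i) ^ 2 else 0 := by
  rcases Int.even_or_odd i.1 with he | ho
  · rw [if_pos he]
    obtain ⟨t, ht⟩ := he
    have htne : t ≠ 0 := by have := i.2; omega
    have h1 : i.1 = 2 * t := by omega
    have h2 : hlf i = ⟨t, htne⟩ := by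
      have : i.1 / 2 = t := by omega
      simp only [hlf, this]
      rw [dif_pos htne]
    rw [← xv_coe i, h1, heven t htne, h2, xv, dif_pos htne]
  · rw [if_neg (by simpa [Int.even_iff, Int.odd_iff] using ho)]
    obtain ⟨t, ht⟩ := ho
    rw [← xv_coe i, ht]
    exact hodd t

open Classical in
noncomputable def Kset (e : Exp) : Finset NZ :=
  e.support.filter (fun n => Even n.1 ∧ Odd (e n))

lemma mem_Kset {e : Exp} {n : NZ} : n ∈ Kset e ↔ Even n.1 ∧ Odd (e n) := by
  classical
  constructor
  · intro h
    simpa using (Finset.mem_filter.1 h).2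
  · intro h
    refine Finset.mem_filter.2 ⟨?_, by simpa using h⟩
    rw [Finsupp.mem_support_iff]
    rcases h.2 with ⟨t, ht⟩
    omega

noncomputable def tm (e : Exp) (n : NZ) : Exp :=
  e - Finsupp.single n 1 + Finsupp.single (hlf n) 2

lemma Dmono (heven : ∀ k : ℤ, k ≠ 0 → D (xv (2 * k)) = (xv k) ^ 2)
    (hodd : ∀ k : ℤ, D (xv (2 * k + 1)) = 0) (e : Exp) : D (monomial e 1) = ∑ n ∈ Kset e, monomial (tm e n) 1 := by
  classical
  have hD : D = mkDerivation (ZMod 2) (fun i => if Even i.1 then X (hlf i) ^ 2 else 0) := by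
    apply derivation_ext
    intro i
    rw [DX D heven hodd, mkDerivation_X]
  rw [hD, mkDerivation_monomial, one_smul, Finsupp.sum]
  have hsub : Kset e ⊆ e.support := Finset.filter_subset _ _
  rw [← Finset.sum_subset hsub ?van]
  case van =>
    intro i hi hni
    have : ¬ (Even i.1 ∧ Odd (e i)) := by
      intro hc
      exact hni (mem_Kset.2 hc)
    by_cases hev : Even i.1
    · have hodd' : ¬ Odd (e i) := fun hc => this ⟨hev, hc⟩
      have : ((e i : ℕ) : ZMod 2) = 0 := natCast_even (Nat.not_odd_iff_even.1 hodd')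
      rw [this, monomial_zero, zero_smul]
    · rw [if_neg hev, smul_zero]
  apply Finset.sum_congr rfl
  intro n hn
  obtain ⟨hev, hoddn⟩ := mem_Kset.1 hn
  rw [if_pos hev, natCast_odd hoddn, smul_eq_mul, X_pow_eq_monomial, monomial_mul, mul_one]
  rfl

lemma Dsq (heven : ∀ k : ℤ, k ≠ 0 → D (xv (2 * k)) = (xv k) ^ 2)
    (hodd : ∀ k : ℤ, D (xv (2 * k + 1)) = 0) (p : Xpoly) : D (D p) = 0 := by
  have hX : ∀ i : NZ, D (D (X i)) = 0 := by
    intro i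
    rw [DX D heven hodd]
    by_cases hev : Even i.1
    · rw [if_pos hev, sq, Derivation.leibniz, addself]
    · rw [if_neg hev, map_zero]
  induction p using MvPolynomial.induction_on with
  | C a =>
      rw [MvPolynomial.derivation_C, map_zero]
  | add p q hp hq => rw [map_add, map_add, hp, hq, add_zero]
  | mul_X p i hp =>
      rw [Derivation.leibniz, map_add, smul_eq_mul, smul_eq_mul, Derivation.leibniz,
        Derivation.leibniz, hp, hX i, smul_eq_mul, smul_eq_mul, smul_eq_mul, smul_eq_mul,
        mul_zero, mul_zero]
      rw [zero_add, zero_add, mul_comm]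
      exact addself _

end D

-- linear extension from monomials
noncomputable def lext (F : Exp → Xpoly) : Xpoly →ₗ[ZMod 2] Xpoly :=
  (basisMonomials NZ (ZMod 2)).constr (ZMod 2) F

lemma lext_mono (F : Exp → Xpoly) (e : Exp) : lext F (monomial e 1) = F e := by
  have h := (basisMonomials NZ (ZMod 2)).constr_basis (ZMod 2) F e
  rwa [coe_basisMonomials] at h

lemma lin_ext {f g : Xpoly →ₗ[ZMod 2] Xpoly}
    (h : ∀ e : Exp, f (monomial e 1) = g (monomial e 1)) : f = g := by
  apply Module.Basis.ext (basisMonomials NZ (ZMod 2))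
  intro e
  rw [coe_basisMonomials]
  exact h e



lemma app2 (e : Exp) (a b : NZ) (c d : ℕ) (x : NZ) :
    (e - Finsupp.single a c + Finsupp.single b d) x
      = e x - (if a = x then c else 0) + (if b = x then d else 0) := by
  rw [Finsupp.add_apply, Finsupp.tsub_apply, Finsupp.single_apply, Finsupp.single_apply]

lemma tm_apply (e : Exp) (n : NZ) (x : NZ) :
    tm e n x = e x - (if n = x then 1 else 0) + (if hlf n = x then 2 else 0) := app2 e n _ 1 2 x

open Classical in
noncomputable def Hm (e : Exp) : Xpoly :=
  if h : ∃ k, ¬ triv e k then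
    if Even (e (dbl (kst e h))) then
      monomial (e - Finsupp.single (kst e h) 2 + Finsupp.single (dbl (kst e h)) 1) 1
    else 0
  else 0

open Classical in
noncomputable def Pm (e : Exp) : Xpoly := if ∀ k, triv e k then monomial e 1 else 0

lemma homotopy_mono (D : Derivation (ZMod 2) Xpoly Xpoly) (heven : ∀ k : ℤ, k ≠ 0 → D (xv (2 * k)) = (xv k) ^ 2)
    (hodd : ∀ k : ℤ, D (xv (2 * k + 1)) = 0) (e : Exp) :
    D (Hm e) + lext Hm (D (monomial e 1)) = monomial e 1 + Pm e := by
  classical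
  by_cases hex : ∃ k, ¬ triv e k
  · -- not clean
    set k := kst e hex with hkdef
    have hbad : ¬ triv e k := kst_bad e hex
    have hmin : ∀ j, ord j < ord k → triv e j := by
      intro j hj
      by_contra hc
      have := kst_min e hex j hc
      rw [← hkdef] at this
      omega
    have hPm : Pm e = 0 := by
      rw [Pm, if_neg]
      intro hall
      exact hbad (hall k)
    have hHD : lext Hm (D (monomial e 1)) = ∑ n ∈ Kset e, Hm (tm e n) := by
      rw [Dmono D heven hodd, map_sum]
      exact Finset.sum_congr rfl (fun n _ => lext_mono _ _)
    -- facts about n ∈ Kset e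
    have hord_n : ∀ n ∈ Kset e, ord k ≤ ord (hlf n) ∧ ord (hlf n) < ord n := by
      intro n hn
      obtain ⟨hev, hodn⟩ := mem_Kset.1 hn
      have h1 : ¬ triv e (hlf n) := by
        intro ⟨_, h2⟩
        rw [dbl_hlf hev] at h2
        obtain ⟨a, ha⟩ := h2; obtain ⟨b, hb⟩ := hodn; omega
      have h2 := ord_lt_dbl (hlf n)
      rw [dbl_hlf hev] at h2
      refine ⟨?_, h2⟩
      by_contra hc
      exact h1 (hmin _ (by omega))
    have hnk : ∀ n ∈ Kset e, n ≠ k := by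
      intro n hn h
      have := hord_n n hn
      subst h
      omega
    have hhlfnj : ∀ n ∈ Kset e, ∀ j, ord j < ord k → hlf n ≠ j ∧ n ≠ j ∧ n ≠ dbl j := by
      intro n hn j hj
      have h1 := hord_n n hn
      refine ⟨fun h => by subst h; omega, fun h => by subst h; omega, fun h => ?_⟩
      subst h
      rw [hlf_dbl] at h1
      omega
    -- badness of k in tm e n
    have hbadtm : ∀ n ∈ Kset e, ¬ triv (tm e n) k := by
      intro n hn htr
      obtain ⟨ht1, ht2⟩ := htr
      have hnk' := hnk n hn
      rcases eq_or_ne (hlf n) k with hh | hh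
      · rw [tm_apply, if_neg hnk', if_pos hh] at ht1
        omega
      · rw [tm_apply, if_neg hnk', if_neg hh] at ht1
        -- e k ≤ 1, so Odd (e (dbl k)) from hbad
        have hodd2 : Odd (e (dbl k)) := by
          rcases Nat.even_or_odd (e (dbl k)) with h | h
          · exact absurd ⟨by omega, h⟩ hbad
          · exact h
        have hnd : n ≠ dbl k := by
          intro h
          apply hh
          rw [h, hlf_dbl]
        rw [tm_apply, if_neg hnd] at ht2
        rcases eq_or_ne (hlf n) (dbl k) with h3 | h3
        · rw [if_pos h3] at ht2
          obtain ⟨a, ha⟩ := ht2; obtain ⟨b, hb⟩ := hodd2; omega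
        · rw [if_neg h3] at ht2
          obtain ⟨a, ha⟩ := ht2; obtain ⟨b, hb⟩ := hodd2; omega
    -- minimality is preserved for tm e n
    have htrivtm : ∀ n ∈ Kset e, ∀ j, ord j < ord k → triv (tm e n) j := by
      intro n hn j hj
      obtain ⟨hj1, hj2⟩ := hmin j hj
      obtain ⟨hh, hn1, hn2⟩ := hhlfnj n hn j hj
      constructor
      · rw [tm_apply, if_neg hn1, if_neg hh]
        omega
      · have hnd : n ≠ dbl j := hn2
        rw [tm_apply, if_neg hnd]
        rcases eq_or_ne (hlf n) (dbl j) with h3 | h3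
        · rw [if_pos h3]
          obtain ⟨a, ha⟩ := hj2
          exact ⟨a + 1, by omega⟩
        · rw [if_neg h3]
          simpa using hj2
    have hextm : ∀ n ∈ Kset e, ∃ j, ¬ triv (tm e n) j := fun n hn => ⟨k, hbadtm n hn⟩
    have hksttm : ∀ n (hn : n ∈ Kset e), kst (tm e n) (hextm n hn) = k := by
      intro n hn
      exact kst_eq _ (hbadtm n hn) (htrivtm n hn)
    by_cases hev : Even (e (dbl k))
    · -- B1
      have h2k : 2 ≤ e k := by
        by_contra hc
        exact hbad ⟨by omega, hev⟩
      set e' : Exp := e - Finsupp.single k 2 + Finsupp.single (dbl k) 1 with he'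
      have hHm : Hm e = monomial e' 1 := by
        unfold Hm
        rw [dif_pos hex, ← hkdef, if_pos hev]
      have he'x : ∀ x, e' x = e x - (if k = x then 2 else 0) + (if dbl k = x then 1 else 0) :=
        fun x => app2 e k (dbl k) 2 1 x
      have hdknK : dbl k ∉ Kset e := by
        intro h
        obtain ⟨_, h2⟩ := mem_Kset.1 h
        obtain ⟨a, ha⟩ := hev; obtain ⟨b, hb⟩ := h2; omega
      have hKe' : Kset e' = insert (dbl k) (Kset e) := by
        ext n
        rw [mem_Kset, Finset.mem_insert, mem_Kset]
        rcases eq_or_ne n (dbl k) with rfl | h1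
        · simp only [true_or, iff_true]
          refine ⟨even_dbl k, ?_⟩
          rw [he'x, if_neg (fun h => dbl_ne k h.symm), if_pos rfl]
          obtain ⟨a, ha⟩ := hev
          exact ⟨a, by omega⟩
        · rcases eq_or_ne n k with rfl | h2
          · rw [he'x, if_pos rfl, if_neg (fun h => h1 h.symm)]
            constructor
            · rintro ⟨hevn, hodn⟩
              right
              exact ⟨hevn, by obtain ⟨b, hb⟩ := hodn; exact ⟨b + 1, by omega⟩⟩
            · rintro (h | ⟨hevn, hodn⟩)
              · exact absurd h h1
              · exact ⟨hevn, by obtain ⟨b, hb⟩ := hodn; exact ⟨b - 1, by omega⟩⟩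
          · rw [he'x, if_neg (fun h => h2 h.symm), if_neg (fun h => h1 h.symm)]
            simp only [h1, false_or, tsub_zero, add_zero]
      have htme : tm e' (dbl k) = e := by
        ext x
        rw [tm_apply, hlf_dbl]
        rcases eq_or_ne k x with rfl | h1
        · rw [he'x]
          simp only [eq_self_iff_true, if_true, if_neg (dbl_ne k)]
          omega
        · rcases eq_or_ne (dbl k) x with rfl | h2
          · rw [he'x]
            simp only [eq_self_iff_true, if_true, if_neg (show k ≠ dbl k from fun h => dbl_ne k h.symm)]
            omega
          · rw [he'x]
            simp only [if_neg h1, if_neg h2]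
            omega
      have hDHm : D (Hm e) = monomial e 1 + ∑ n ∈ Kset e, monomial (tm e' n) 1 := by
        rw [hHm, Dmono D heven hodd e', hKe', Finset.sum_insert hdknK, htme]
      have htm2 : ∀ n ∈ Kset e, Hm (tm e n) = monomial (tm e' n) 1 := by
        intro n hn
        have hexn := hextm n hn
        have hnk' := hnk n hn
        have hnd : n ≠ dbl k := fun h => hdknK (h ▸ hn)
        have hhnn : hlf n ≠ n := by
          intro h
          have h5 := hord_n n hn
          rw [h] at h5
          omega
        unfold Hm
        rw [dif_pos hexn, hksttm n hn]
        have hevtm : Even (tm e n (dbl k)) := by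
          rw [tm_apply, if_neg hnd]
          obtain ⟨a, ha⟩ := hev
          rcases eq_or_ne (hlf n) (dbl k) with h3 | h3
          · rw [if_pos h3]
            exact ⟨a + 1, by omega⟩
          · rw [if_neg h3]
            exact ⟨a, by omega⟩
        rw [if_pos hevtm]
        have hexp : (tm e n - Finsupp.single k 2 + Finsupp.single (dbl k) 1) = tm e' n := by
          ext x
          rw [app2, tm_apply, tm_apply, he'x]
          rcases eq_or_ne n x with rfl | hx1
          · simp only [eq_self_iff_true, if_true, if_neg (show k ≠ n from fun h => hnk' h.symm),
              if_neg (show dbl k ≠ n from fun h => hnd h.symm), if_neg hhnn]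
            omega
          · rcases eq_or_ne k x with rfl | hx2
            · simp only [eq_self_iff_true, if_true, if_neg hnk', if_neg (dbl_ne k)]
              split_ifs <;> omega
            · rcases eq_or_ne (dbl k) x with rfl | hx3
              · simp only [eq_self_iff_true, if_true, if_neg hnd,
                  if_neg (show k ≠ dbl k from fun h => dbl_ne k h.symm)]
                split_ifs <;> omega
              · simp only [if_neg hx1, if_neg hx2, if_neg hx3]
                split_ifs <;> omega
        rw [hexp]
      rw [hDHm, hHD, hPm, add_zero,
        show (∑ n ∈ Kset e, Hm (tm e n)) = ∑ n ∈ Kset e, monomial (tm e' n) 1 from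
          Finset.sum_congr rfl htm2, add_assoc, addself, add_zero]
    · have hod2 : Odd (e (dbl k)) := by
        rcases Nat.even_or_odd (e (dbl k)) with h | h
        · exact absurd h hev
        · exact h
      have hHm0 : Hm e = 0 := by
        unfold Hm
        rw [dif_pos hex, ← hkdef, if_neg hev]
      have hdbmem : dbl k ∈ Kset e := mem_Kset.2 ⟨even_dbl k, hod2⟩
      have hzero : ∀ n ∈ Kset e, n ≠ dbl k → Hm (tm e n) = 0 := by
        intro n hn hnd
        unfold Hm
        rw [dif_pos (hextm n hn), hksttm n hn, if_neg]
        rw [tm_apply, if_neg hnd]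
        intro hc
        obtain ⟨b, hb⟩ := hod2
        rcases eq_or_ne (hlf n) (dbl k) with h3 | h3
        · rw [if_pos h3] at hc
          obtain ⟨a, ha⟩ := hc
          omega
        · rw [if_neg h3] at hc
          obtain ⟨a, ha⟩ := hc
          omega
      have hmain : Hm (tm e (dbl k)) = monomial e 1 := by
        have hkd : k ≠ dbl k := fun h => dbl_ne k h.symm
        obtain ⟨b, hb⟩ := hod2
        unfold Hm
        rw [dif_pos (hextm _ hdbmem), hksttm _ hdbmem, if_pos]
        · have hexp : (tm e (dbl k) - Finsupp.single k 2 + Finsupp.single (dbl k) 1) = e := by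
            ext x
            rw [app2, tm_apply, hlf_dbl]
            rcases eq_or_ne k x with rfl | h1
            · simp only [eq_self_iff_true, if_true, if_neg (dbl_ne k)]
              omega
            · rcases eq_or_ne (dbl k) x with rfl | h2
              · simp only [eq_self_iff_true, if_true, if_neg hkd]
                omega
              · simp only [if_neg h1, if_neg h2]
                omega
          rw [hexp]
        · rw [tm_apply, if_pos rfl, hlf_dbl, if_neg hkd]
          exact ⟨b, by omega⟩
      rw [hHm0, map_zero, zero_add, hHD, hPm, add_zero,
        Finset.sum_eq_single_of_mem (dbl k) hdbmem hzero]
      exact hmain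
  · -- clean case
    have hcl : ∀ j, triv e j := fun j => of_not_not (not_exists.1 hex j)
    have hK : Kset e = ∅ := by
      ext n
      simp only [mem_Kset, Finset.notMem_empty, iff_false]
      rintro ⟨hev, hodn⟩
      have h1 := (hcl (hlf n)).2
      rw [dbl_hlf hev] at h1
      obtain ⟨a, ha⟩ := h1; obtain ⟨b, hb⟩ := hodn; omega
    unfold Hm
    rw [dif_neg hex, map_zero, Dmono D heven hodd, hK, Finset.sum_empty, map_zero,
      Pm, if_pos hcl, zero_add]
    exact (addself _).symm


lemma trivAll_iff (e : Exp) :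
    (∀ k, triv e k) ↔ (∀ n : NZ, e n ≤ 1 ∧ (e n ≠ 0 → Odd (n.1 : ℤ))) := by
  constructor
  · intro h n
    refine ⟨(h n).1, fun hne => ?_⟩
    rcases Int.even_or_odd n.1 with hev | ho
    · exfalso
      have h2 := (h (hlf n)).2
      rw [dbl_hlf hev] at h2
      have h3 := (h n).1
      obtain ⟨a, ha⟩ := h2
      omega
    · exact ho
  · intro h k
    refine ⟨(h k).1, ?_⟩
    rcases Nat.eq_zero_or_pos (e (dbl k)) with h0 | h0
    · rw [h0]; exact Even.zero
    · exfalso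
      have h2 := (h (dbl k)).2 (by omega)
      obtain ⟨a, ha⟩ := h2
      have h3 := even_dbl k
      obtain ⟨b, hb⟩ := h3
      omega

noncomputable def CleanSpan' : Submodule (ZMod 2) Xpoly :=
  Submodule.span (ZMod 2) {p | ∃ e : Exp, (∀ k, triv e k) ∧ p = monomial e 1}

noncomputable def Hop : Xpoly →ₗ[ZMod 2] Xpoly := lext Hm
noncomputable def PiOp : Xpoly →ₗ[ZMod 2] Xpoly := lext Pm

lemma homotopy_global (D : Derivation (ZMod 2) Xpoly Xpoly)
    (heven : ∀ k : ℤ, k ≠ 0 → D (xv (2 * k)) = (xv k) ^ 2)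
    (hodd : ∀ k : ℤ, D (xv (2 * k + 1)) = 0) (p : Xpoly) :
    D (Hop p) + Hop (D p) = p + PiOp p := by
  have h : ((D : Xpoly →ₗ[ZMod 2] Xpoly) ∘ₗ Hop + Hop ∘ₗ (D : Xpoly →ₗ[ZMod 2] Xpoly)
      : Xpoly →ₗ[ZMod 2] Xpoly) = LinearMap.id + PiOp := by
    apply lin_ext
    intro e
    simp only [LinearMap.add_apply, LinearMap.comp_apply, LinearMap.id_apply,
      Derivation.coeFn_coe]
    rw [show Hop ((monomial e) 1) = Hm e from lext_mono _ _,
      show PiOp ((monomial e) 1) = Pm e from lext_mono _ _]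
    exact homotopy_mono D heven hodd e
  have := congrArg (fun f => f p) h
  simpa using this

lemma Pm_mem (e : Exp) : Pm e ∈ CleanSpan' := by
  unfold Pm
  split_ifs with h
  · exact Submodule.subset_span ⟨e, h, rfl⟩
  · exact zero_mem _

lemma PiOp_mem (p : Xpoly) : PiOp p ∈ CleanSpan' := by
  rw [← support_sum_monomial_coeff p, map_sum]
  apply Submodule.sum_mem
  intro v _
  have h : (monomial v) (coeff v p) = (coeff v p) • monomial v 1 := by
    rw [smul_monomial, smul_eq_mul, mul_one]
  rw [h, map_smul]
  have h2 : PiOp (monomial v 1) = Pm v := lext_mono _ _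
  rw [h2]
  exact Submodule.smul_mem _ _ (Pm_mem v)

lemma Pm_tm (e : Exp) (n : NZ) (hn : n ∈ Kset e) : Pm (tm e n) = 0 := by
  obtain ⟨hev, _⟩ := mem_Kset.1 hn
  unfold Pm
  rw [if_neg]
  intro hall
  have h1 := (hall (hlf n)).1
  have hne : n ≠ hlf n := by
    intro h
    have := ord_lt_dbl (hlf n)
    rw [dbl_hlf hev, ← h] at this
    omega
  rw [tm_apply, if_neg hne, if_pos rfl] at h1
  omega

lemma PiOpD (D : Derivation (ZMod 2) Xpoly Xpoly)
    (heven : ∀ k : ℤ, k ≠ 0 → D (xv (2 * k)) = (xv k) ^ 2)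
    (hodd : ∀ k : ℤ, D (xv (2 * k + 1)) = 0) (p : Xpoly) :
    PiOp (D p) = 0 := by
  have h : (PiOp ∘ₗ (D : Xpoly →ₗ[ZMod 2] Xpoly) : Xpoly →ₗ[ZMod 2] Xpoly) = 0 := by
    apply lin_ext
    intro e
    simp only [LinearMap.comp_apply, LinearMap.zero_apply, Derivation.coeFn_coe]
    rw [Dmono D heven hodd, map_sum]
    apply Finset.sum_eq_zero
    intro n hn
    rw [show PiOp ((monomial (tm e n)) 1) = Pm (tm e n) from lext_mono _ _, Pm_tm e n hn]
  have := congrArg (fun f => f p) h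
  simpa using this

lemma PiOp_fix (p : Xpoly) (hp : p ∈ CleanSpan') : PiOp p = p := by
  induction hp using Submodule.span_induction with
  | mem x hx =>
      obtain ⟨e, hcl, rfl⟩ := hx
      rw [show PiOp ((monomial e) 1) = Pm e from lext_mono _ _, Pm, if_pos hcl]
  | zero => exact map_zero _
  | add x y _ _ hx hy => rw [map_add, hx, hy]
  | smul c x _ hx => rw [map_smul, hx]

lemma D_clean (D : Derivation (ZMod 2) Xpoly Xpoly)
    (heven : ∀ k : ℤ, k ≠ 0 → D (xv (2 * k)) = (xv k) ^ 2)
    (hodd : ∀ k : ℤ, D (xv (2 * k + 1)) = 0) (p : Xpoly) (hp : p ∈ CleanSpan') :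
    D p = 0 := by
  induction hp using Submodule.span_induction with
  | mem x hx =>
      obtain ⟨e, hcl, rfl⟩ := hx
      rw [Dmono D heven hodd]
      have hK : Kset e = ∅ := by
        ext n
        simp only [mem_Kset, Finset.notMem_empty, iff_false]
        rintro ⟨hev, hodn⟩
        have h1 := (hcl (hlf n)).2
        rw [dbl_hlf hev] at h1
        obtain ⟨a, ha⟩ := h1; obtain ⟨b, hb⟩ := hodn; omega
      rw [hK, Finset.sum_empty]
  | zero => exact map_zero _
  | add x y _ _ hx hy => rw [map_add, hx, hy, add_zero]
  | smul c x _ hx => rw [Derivation.map_smul, hx, smul_zero]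

lemma xv_one : xv 1 = X one1 := by
  rw [xv, dif_pos one_ne_zero]
  rfl

lemma X_mono (s : NZ) : (X s : Xpoly) = monomial (Finsupp.single s 1) 1 := by
  have := X_pow_eq_monomial (n := s) (e := 1) (R := ZMod 2)
  rwa [pow_one] at this

lemma split_lemma : CleanSpan' ≤
    CleanSpan ⊔ Submodule.map (LinearMap.mulLeft (ZMod 2) (xv 1)) CleanSpan := by
  rw [CleanSpan', Submodule.span_le]
  rintro p ⟨e, hcl, rfl⟩
  have hQ := (trivAll_iff e).1 hcl
  by_cases h1 : e one1 = 0
  · apply Submodule.mem_sup_left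
    apply Submodule.subset_span
    refine ⟨e, fun n => ⟨(hQ n).1, fun hne => ⟨(hQ n).2 hne, fun hn1 => ?_⟩⟩, rfl⟩
    have : n = one1 := Subtype.ext hn1
    rw [this] at hne
    exact hne h1
  · have h1' : e one1 = 1 := by
      have := (hQ one1).1
      omega
    set e0 : Exp := e - Finsupp.single one1 1 with he0
    have he0x : ∀ x, e0 x = e x - (if one1 = x then 1 else 0) := by
      intro x
      rw [he0, Finsupp.tsub_apply, Finsupp.single_apply]
    have hexp : e = Finsupp.single one1 1 + e0 := by
      ext x
      rw [Finsupp.add_apply, Finsupp.single_apply, he0x]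
      rcases eq_or_ne one1 x with rfl | hx
      · simp only [eq_self_iff_true, if_true]
        omega
      · simp only [if_neg hx]
        omega
    have hmul : (monomial e) (1 : ZMod 2) = xv 1 * monomial e0 1 := by
      rw [xv_one, X_mono, monomial_mul, one_mul, ← hexp]
    rw [hmul]
    apply Submodule.mem_sup_right
    refine ⟨monomial e0 1, ?_, rfl⟩
    apply Submodule.subset_span
    refine ⟨e0, fun n => ?_, rfl⟩
    rw [he0x]
    refine ⟨by have := (hQ n).1; split_ifs <;> omega, fun hne => ?_⟩
    have hne' : e n ≠ 0 := by
      intro h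
      rw [h] at hne
      simp at hne
    refine ⟨(hQ n).2 hne', fun hn1 => ?_⟩
    have hx : n = one1 := Subtype.ext hn1
    rw [hx, if_pos rfl, h1'] at hne
    simp at hne

lemma clean_le_clean' : CleanSpan ≤ CleanSpan' := by
  rw [CleanSpan, Submodule.span_le]
  rintro p ⟨e, hce, rfl⟩
  apply Submodule.subset_span
  exact ⟨e, (trivAll_iff e).2 (fun n => ⟨(hce n).1, fun h => ((hce n).2 h).1⟩), rfl⟩

lemma mulX1_clean (t : Xpoly) (ht : t ∈ CleanSpan) : xv 1 * t ∈ CleanSpan' := by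
  induction ht using Submodule.span_induction with
  | mem x hx =>
      obtain ⟨e, hce, rfl⟩ := hx
      have h1 : e one1 = 0 := by
        by_contra h
        exact ((hce one1).2 h).2 rfl
      rw [xv_one, X_mono, monomial_mul, one_mul]
      apply Submodule.subset_span
      refine ⟨_, ?_, rfl⟩
      apply (trivAll_iff _).2
      intro n
      rw [Finsupp.add_apply, Finsupp.single_apply]
      constructor
      · have := (hce n).1
        rcases eq_or_ne one1 n with rfl | hx2
        · rw [if_pos rfl, h1]
        · rw [if_neg hx2]
          omega
      · intro hne
        rcases eq_or_ne one1 n with rfl | hx2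
        · exact ⟨0, by simp [one1]⟩
        · rw [if_neg hx2, zero_add] at hne
          exact ((hce n).2 hne).1
  | zero => rw [mul_zero]; exact zero_mem _
  | add x y _ _ hx hy => rw [mul_add]; exact add_mem hx hy
  | smul c x _ hx => rw [mul_smul_comm]; exact Submodule.smul_mem _ _ hx



section Main
variable (D : Derivation (ZMod 2) Xpoly Xpoly)
variable (heven : ∀ k : ℤ, k ≠ 0 → D (xv (2 * k)) = (xv k) ^ 2)
variable (hodd : ∀ k : ℤ, D (xv (2 * k + 1)) = 0)
variable (dA : AX →ₗ[ZMod 2] AX)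
variable (hdA : ∀ (m : ℕ) (p : Xpoly), dA (Finsupp.single m p) =
      (∑ j ∈ Finset.range m, Finsupp.single j (xv (m - j : ℤ) * p)) +
        Finsupp.single m (D p))

include heven hodd in
lemma keyq (q w : Xpoly) (hq : D q = 0) (hw : xv 1 * q = D w) :
    ∃ t ∈ CleanSpan, ∃ s : Xpoly, q = xv 1 * t + D s := by
  have hgl := homotopy_global D heven hodd q
  rw [hq, map_zero, add_zero] at hgl
  set r := Hop q with hrdef
  have hq' : q = PiOp q + D r := by
    apply eq_of_addeq
    rw [hgl]
    have h3 : q + (PiOp q + (q + PiOp q)) = (q + q) + (PiOp q + PiOp q) := by ring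
    rw [h3, addself, addself, add_zero]
  obtain ⟨c, hc, y, hy, hdec⟩ := Submodule.mem_sup.1 (split_lemma (PiOp_mem q))
  obtain ⟨t, ht, rfl⟩ := hy
  simp only [LinearMap.mulLeft_apply] at hdec
  have hDt : D t = 0 := D_clean D heven hodd t (clean_le_clean' ht)
  have hqd : q = c + xv 1 * t + D r := by
    rw [hdec]
    exact hq'
  have hDx2t : D (xv 2 * t) = xv 1 ^ 2 * t := by
    rw [Derivation.leibniz, smul_eq_mul, smul_eq_mul, hDt, mul_zero, zero_add,
      show (2:ℤ) = 2 * 1 by ring, heven 1 one_ne_zero, mul_comm]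
  have hDx1 : D (xv 1) = 0 := by
    have := hodd 0
    rwa [show (2 * 0 + 1 : ℤ) = 1 by ring] at this
  have hDx1r : D (xv 1 * r) = xv 1 * D r := by
    rw [Derivation.leibniz, smul_eq_mul, smul_eq_mul, hDx1, mul_zero, add_zero]
  have hx1c : xv 1 * c = D (w + (xv 2 * t + xv 1 * r)) := by
    rw [map_add, map_add, ← hw, hDx2t, hDx1r]
    have h5 : xv 1 * q = xv 1 * c + (xv 1 ^ 2 * t + xv 1 * D r) := by
      rw [hqd, mul_add, mul_add, sq]
      ring
    rw [h5, add_assoc, addself, add_zero]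
  have hc0 : c = 0 := by
    have h6 : xv 1 * c = 0 := by
      calc xv 1 * c = PiOp (xv 1 * c) := (PiOp_fix _ (mulX1_clean c hc)).symm
        _ = PiOp (D (w + (xv 2 * t + xv 1 * r))) := by rw [← hx1c]
        _ = 0 := PiOpD D heven hodd _
    rcases mul_eq_zero.1 h6 with h | h
    · exfalso
      rw [xv_one] at h
      exact X_ne_zero _ h
    · exact h
  refine ⟨t, ht, r, ?_⟩
  rw [hqd, hc0, zero_add]

include hdA in
lemma dA_single_apply (m j : ℕ) (p : Xpoly) :
    (dA (Finsupp.single m p)) j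
      = (if j < m then xv ((m:ℤ) - j) * p else 0) + (if m = j then D p else 0) := by
  rw [hdA, Finsupp.add_apply, Finsupp.single_apply]
  congr 1
  rw [Finsupp.finset_sum_apply]
  simp only [Finsupp.single_apply]
  rw [Finset.sum_ite_eq' (Finset.range m) j (fun i => xv ((m:ℤ) - i) * p)]
  simp [Finset.mem_range]

include hdA in
lemma comp_dA (f : AX) (j : ℕ) :
    (dA f) j = (∑ m ∈ f.support, if j < m then xv ((m:ℤ) - j) * f m else 0) + D (f j) := by
  conv_lhs => rw [← Finsupp.sum_single f, Finsupp.sum]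
  rw [map_sum, Finsupp.finset_sum_apply]
  rw [Finset.sum_congr rfl (fun m _ => dA_single_apply D dA hdA m j (f m))]
  rw [Finset.sum_add_distrib]
  congr 1
  rw [Finset.sum_ite_eq' f.support j (fun m => D (f m))]
  split_ifs with h
  · rfl
  · rw [Finsupp.notMem_support_iff.1 h, map_zero]

include heven hodd in
lemma sumlem (i m : ℕ) (him : i < m) :
    ∑ j ∈ Finset.Ioo i m, xv ((j:ℤ) - i) * xv ((m:ℤ) - j) = D (xv ((m:ℤ) - i)) := by
  rcases Nat.even_or_odd (m - i) with hev | hod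
  · obtain ⟨a, ha⟩ := hev
    have ha1 : 1 ≤ a := by omega
    have hD : D (xv ((m:ℤ) - i)) = xv a ^ 2 := by
      have h1 : ((m:ℤ) - i) = 2 * a := by omega
      rw [h1]
      exact heven a (by omega)
    have hj0 : i + a ∈ Finset.Ioo i m := by
      rw [Finset.mem_Ioo]
      omega
    rw [← Finset.add_sum_erase _ _ hj0]
    have hterm : xv (((i + a : ℕ):ℤ) - i) * xv ((m:ℤ) - ((i + a : ℕ):ℤ)) = xv a ^ 2 := by
      have h1 : (((i + a : ℕ):ℤ) - i) = a := by omega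
      have h2 : ((m:ℤ) - ((i + a : ℕ):ℤ)) = a := by omega
      rw [h1, h2, sq]
    rw [hterm, hD]
    have hzero : ∑ j ∈ (Finset.Ioo i m).erase (i + a),
        xv ((j:ℤ) - i) * xv ((m:ℤ) - j) = 0 := by
      apply Finset.sum_involution (g := fun j _ => m + i - j)
      · intro j hj
        rw [Finset.mem_erase, Finset.mem_Ioo] at hj
        have h1 : (((m + i - j : ℕ):ℤ) - i) = (m:ℤ) - j := by omega
        have h2 : ((m:ℤ) - ((m + i - j : ℕ):ℤ)) = (j:ℤ) - i := by omega
        rw [h1, h2, mul_comm]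
        exact addself _
      · intro j hj _
        rw [Finset.mem_erase, Finset.mem_Ioo] at hj
        omega
      · intro j hj
        rw [Finset.mem_erase, Finset.mem_Ioo] at hj ⊢
        omega
      · intro j hj
        rw [Finset.mem_erase, Finset.mem_Ioo] at hj
        omega
    rw [hzero, add_zero]
  · obtain ⟨a, ha⟩ := hod
    have hD : D (xv ((m:ℤ) - i)) = 0 := by
      have h1 : ((m:ℤ) - i) = 2 * a + 1 := by omega
      rw [h1]
      exact hodd a
    rw [hD]
    apply Finset.sum_involution (g := fun j _ => m + i - j)
    · intro j hj
      rw [Finset.mem_Ioo] at hj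
      have h1 : (((m + i - j : ℕ):ℤ) - i) = (m:ℤ) - j := by omega
      have h2 : ((m:ℤ) - ((m + i - j : ℕ):ℤ)) = (j:ℤ) - i := by omega
      rw [h1, h2, mul_comm]
      exact addself _
    · intro j hj _
      rw [Finset.mem_Ioo] at hj
      omega
    · intro j hj
      rw [Finset.mem_Ioo] at hj ⊢
      omega
    · intro j hj
      rw [Finset.mem_Ioo] at hj
      omega

include heven hodd hdA in
lemma dAdA_single (m : ℕ) (p : Xpoly) : dA (dA (Finsupp.single m p)) = 0 := by
  rw [hdA, map_add, map_sum, hdA, Dsq D heven hodd p, Finsupp.single_zero, add_zero]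
  rw [Finset.sum_congr rfl (fun j _ => hdA j (xv ((m:ℤ) - j) * p))]
  rw [Finset.sum_add_distrib]
  have hB : ∀ j ∈ Finset.range m, Finsupp.single j (D (xv ((m:ℤ) - j) * p))
      = Finsupp.single j (xv ((m:ℤ) - j) * D p) + Finsupp.single j (D (xv ((m:ℤ) - j)) * p) := by
    intro j _
    rw [Derivation.leibniz, smul_eq_mul, smul_eq_mul, mul_comm p _, Finsupp.single_add]
  rw [Finset.sum_congr rfl hB, Finset.sum_add_distrib]
  have hA : (∑ j ∈ Finset.range m, ∑ i ∈ Finset.range j,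
        Finsupp.single i (xv ((j:ℤ) - i) * (xv ((m:ℤ) - j) * p)))
      = ∑ i ∈ Finset.range m, Finsupp.single i (D (xv ((m:ℤ) - i)) * p) := by
    have h1 : ∀ j ∈ Finset.range m, (∑ i ∈ Finset.range j,
          Finsupp.single i (xv ((j:ℤ) - i) * (xv ((m:ℤ) - j) * p)))
        = ∑ i ∈ Finset.range m, if i < j then
            Finsupp.single i (xv ((j:ℤ) - i) * (xv ((m:ℤ) - j) * p)) else 0 := by
      intro j hj
      rw [Finset.mem_range] at hj
      rw [← Finset.sum_filter]
      congr 1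
      ext i
      simp only [Finset.mem_filter, Finset.mem_range]
      omega
    rw [Finset.sum_congr rfl h1, Finset.sum_comm]
    apply Finset.sum_congr rfl
    intro i hi
    rw [Finset.mem_range] at hi
    rw [← Finset.sum_filter]
    have hf : (Finset.range m).filter (fun j => i < j) = Finset.Ioo i m := by
      ext j
      simp only [Finset.mem_filter, Finset.mem_range, Finset.mem_Ioo]
      omega
    rw [hf]
    have h2 : ∀ j ∈ Finset.Ioo i m,
        Finsupp.single i (xv ((j:ℤ) - i) * (xv ((m:ℤ) - j) * p))
          = Finsupp.single i ((xv ((j:ℤ) - i) * xv ((m:ℤ) - j)) * p) := by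
      intro j _
      rw [mul_assoc]
    have h3 : ∑ j ∈ Finset.Ioo i m,
        Finsupp.single i ((xv ((j:ℤ) - i) * xv ((m:ℤ) - j)) * p)
        = Finsupp.single i ((∑ j ∈ Finset.Ioo i m, xv ((j:ℤ) - i) * xv ((m:ℤ) - j)) * p) := by
      rw [Finset.sum_mul]
      exact (map_sum (Finsupp.singleAddHom i)
        (fun (j : ℕ) => (xv ((j:ℤ) - i) * xv ((m:ℤ) - j)) * p) (Finset.Ioo i m)).symm
    rw [Finset.sum_congr rfl h2, h3, sumlem D heven hodd i m hi]
  rw [hA]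
  rw [show ∀ x y : AX, x + (y + x) + y = (x + x) + (y + y) from fun x y => by abel]
  rw [addself, addself, add_zero]

include heven hodd hdA in
lemma dAdA (v : AX) : dA (dA v) = 0 := by
  conv_lhs => rw [← Finsupp.sum_single v, Finsupp.sum]
  rw [map_sum, map_sum]
  exact Finset.sum_eq_zero (fun m _ => dAdA_single D heven hodd dA hdA m (v m))

include heven hodd hdA in
lemma main_ind : ∀ N : ℕ, ∀ f : AX, dA f = 0 → (∀ m, N ≤ m → f m = 0) →
    ∃ p ∈ CleanSpan, ∃ g : AX, f = Finsupp.single 0 p + dA g := by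
  intro N
  induction N with
  | zero =>
      intro f _ hbd
      have hf : f = 0 := Finsupp.ext (fun m => hbd m (Nat.zero_le m))
      exact ⟨0, zero_mem _, 0, by rw [hf, Finsupp.single_zero, map_zero, add_zero]⟩
  | succ n ih =>
      intro f hf hbd
      have hDq : D (f n) = 0 := by
        have h1 : (dA f) n = 0 := by rw [hf]; rfl
        rw [comp_dA D dA hdA f n] at h1
        have h2 : (∑ m ∈ f.support, if n < m then xv ((m:ℤ) - n) * f m else 0) = 0 := by
          apply Finset.sum_eq_zero
          intro m _
          split_ifs with h
          · rw [hbd m (by omega), mul_zero]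
          · rfl
        rw [h2, zero_add] at h1
        exact h1
      rcases Nat.eq_zero_or_pos n with rfl | hn
      · -- top index 0 : f = single 0 (f 0)
        set q := f 0 with hq0
        have hgl := homotopy_global D heven hodd q
        rw [hDq, map_zero, add_zero] at hgl
        set r := Hop q with hrdef
        have hq' : q = PiOp q + D r := by
          apply eq_of_addeq
          rw [hgl]
          have h3 : q + (PiOp q + (q + PiOp q)) = (q + q) + (PiOp q + PiOp q) := by ring
          rw [h3, addself, addself, add_zero]
        obtain ⟨c, hc, y, hy, hdec⟩ := Submodule.mem_sup.1 (split_lemma (PiOp_mem q))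
        obtain ⟨t, ht, rfl⟩ := hy
        simp only [LinearMap.mulLeft_apply] at hdec
        have hDt : D t = 0 := D_clean D heven hodd t (clean_le_clean' ht)
        have hqd : q = c + (xv 1 * t + D r) := by
          rw [← add_assoc, hdec]
          exact hq'
        have hfs : f = Finsupp.single 0 q := by
          ext m
          rcases Nat.eq_zero_or_pos m with rfl | hm
          · rw [Finsupp.single_eq_same]
          · rw [hbd m (by omega), Finsupp.single_apply, if_neg (by omega)]
        refine ⟨c, hc, Finsupp.single 1 t + Finsupp.single 0 r, ?_⟩
        rw [map_add, hdA 1 t, hdA 0 r, hDt, Finsupp.single_zero, add_zero]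
        rw [Finset.range_one, Finset.sum_singleton, Finset.range_zero, Finset.sum_empty, zero_add]
        rw [hfs, hqd]
        have hxv1 : xv ((1:ℕ) - (0:ℕ) : ℤ) = xv 1 := by norm_num
        rw [hxv1, Finsupp.single_add, Finsupp.single_add]
      · -- top index n ≥ 1; write n = n'+1? We have f m = 0 for m ≥ n+1, top q = f n.
        set q := f n with hqdef
        have hx1q : xv 1 * q = D (f (n - 1)) := by
          have h1 : (dA f) (n - 1) = 0 := by rw [hf]; rfl
          rw [comp_dA D dA hdA f (n - 1)] at h1
          have h2 : (∑ m ∈ f.support, if n - 1 < m then xv ((m:ℤ) - (n - 1:ℕ)) * f m else 0)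
              = xv 1 * q := by
            rw [Finset.sum_eq_single n]
            · rw [if_pos (show n - 1 < n by omega), ← hqdef,
                show ((n:ℤ) - ((n - 1 : ℕ) : ℤ)) = 1 by omega]
            · intro m _ hmn
              split_ifs with h
              · rw [hbd m (by omega), mul_zero]
              · rfl
            · intro hns
              have hz : f n = 0 := Finsupp.notMem_support_iff.1 hns
              rw [if_pos (show n - 1 < n by omega)]
              simp [hqdef, hz]
          rw [h2] at h1
          exact eq_of_addeq h1
        obtain ⟨t, ht, s, hq'⟩ := keyq D heven hodd q (f (n - 1)) hDq hx1q
        have hDt : D t = 0 := D_clean D heven hodd t (clean_le_clean' ht)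
        set g1 : AX := Finsupp.single (n + 1) t + Finsupp.single n s with hg1
        set f2 : AX := f + dA g1 with hf2
        have hf2c : dA f2 = 0 := by
          rw [hf2, map_add, hf, zero_add, dAdA D heven hodd dA hdA]
        have hf2bd : ∀ m, n ≤ m → f2 m = 0 := by
          intro m hm
          have hg1m : (dA g1) m = (if m < n + 1 then xv ((n + 1 : ℕ) - (m:ℕ) : ℤ) * t else 0)
              + (if n + 1 = m then D t else 0)
              + ((if m < n then xv ((n:ℕ) - (m:ℕ) : ℤ) * s else 0)
                + (if n = m then D s else 0)) := by
            rw [hg1, map_add, Finsupp.add_apply,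
              dA_single_apply D dA hdA (n + 1) m t, dA_single_apply D dA hdA n m s]
          rcases eq_or_lt_of_le hm with rfl | hlt
          · rw [hf2, Finsupp.add_apply, hg1m]
            rw [if_pos (show n < n + 1 by omega), if_neg (show ¬ n + 1 = n by omega),
              if_neg (show ¬ n < n by omega), if_pos rfl]
            have hxv1 : xv ((n + 1 : ℕ) - (n:ℕ) : ℤ) = xv 1 := by
              have harg : ((n + 1 : ℕ) : ℤ) - ((n : ℕ) : ℤ) = 1 := by omega
              rw [harg]
            rw [hxv1, add_zero, zero_add, ← hqdef, hq']
            exact addself _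
          · rw [hf2, Finsupp.add_apply, hg1m]
            rw [hbd m (by omega : n + 1 ≤ m), if_neg (show ¬ m < n + 1 by omega),
              if_neg (show ¬ m < n by omega)]
            rcases eq_or_ne (n + 1) m with rfl | hm2
            · rw [if_pos rfl, hDt, if_neg (by omega : ¬n = n + 1)]
              simp
            · rw [if_neg hm2, if_neg (by omega : ¬n = m)]
              simp
        obtain ⟨p, hp, g, hg⟩ := ih f2 hf2c hf2bd
        refine ⟨p, hp, g + g1, ?_⟩
        rw [map_add, ← add_assoc, ← hg, hf2, add_assoc, addself, add_zero]

end Main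
end Aux14

/-- In the chain complex `A_+ ⊗ X` (Leibniz rule and
`∂ a_{n-1/2} = Σ_{i=1}^{n-1} a_{i-1/2} x_{n-i}`), every cycle `f` is homologous to
`a_{1/2} · p` with `p` a clean polynomial: `f = a_{1/2} p + ∂ g`. -/
theorem stmt14 (D : Derivation (ZMod 2) Xpoly Xpoly)
    (heven : ∀ k : ℤ, k ≠ 0 → D (xv (2 * k)) = (xv k) ^ 2)
    (hodd : ∀ k : ℤ, D (xv (2 * k + 1)) = 0)
    (dA : AX →ₗ[ZMod 2] AX)
    (hdA : ∀ (m : ℕ) (p : Xpoly), dA (Finsupp.single m p) =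
      (∑ j ∈ Finset.range m, Finsupp.single j (xv (m - j : ℤ) * p)) +
        Finsupp.single m (D p)) :
    ∀ f : AX, dA f = 0 →
      ∃ p ∈ CleanSpan, ∃ g : AX, f = Finsupp.single 0 p + dA g := by
  intro f hf
  have hbd : ∀ m, (f.support.sup id + 1) ≤ m → f m = 0 := by
    intro m hm
    by_contra hc
    have hmem : m ∈ f.support := Finsupp.mem_support_iff.2 hc
    have h2 : id m ≤ f.support.sup id := Finset.le_sup hmem
    simp only [id] at h2
    omega
  exact Aux14.main_ind D heven hodd dA hdA _ f hf hbd
end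

section
/- The map Φ : A_+ ⊗ X → X with Φ(a_{n-1/2} p) = x_n p induces on homology an injective map H(A_+ ⊗ X) → H(X) whose image is exactly the ideal x̄_1 · H(X). Hence H(A_+ ⊗ X) ≅ x̄_1 H(X) as H(X)-modules. -/
open MvPolynomial

namespace Stmt15Aux

lemma char2 {M : Type*} [AddCommMonoid M] [Module (ZMod 2) M] (a : M) : a + a = 0 := by
  have h : a + a = ((1 : ZMod 2) + 1) • a := by rw [add_smul, one_smul]
  rw [h, show (1 : ZMod 2) + 1 = 0 by decide, zero_smul]

lemma c2eq {a b : Xpoly} (h : a + b = 0) : a = b := by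
  linear_combination h - char2 b

/-- the index of `x₁` -/
def i1 : NZ := ⟨1, one_ne_zero⟩

lemma xv_one : xv 1 = X i1 := by rw [xv, dif_pos one_ne_zero]; rfl

lemma xv_nz (n : NZ) : xv n.1 = X n := by rw [xv, dif_pos n.2]

section D
variable (D : Derivation (ZMod 2) Xpoly Xpoly)
  (heven : ∀ k : ℤ, k ≠ 0 → D (xv (2 * k)) = (xv k) ^ 2)
  (hodd : ∀ k : ℤ, D (xv (2 * k + 1)) = 0)

lemma der_sq (E : Derivation (ZMod 2) Xpoly Xpoly) (a : Xpoly) : E (a ^ 2) = 0 := by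
  rw [pow_two, Derivation.leibniz, smul_eq_mul]; exact char2 _

include heven hodd in
lemma hDX (n : NZ) : D (X n) = 0 ∨ ∃ k : ℤ, D (X n) = xv k ^ 2 := by
  rcases Int.even_or_odd n.1 with ⟨k, hk⟩ | ⟨k, hk⟩
  · right
    refine ⟨k, ?_⟩
    have hk0 : k ≠ 0 := by rintro rfl; exact n.2 (by omega)
    have : (2 : ℤ) * k = n.1 := by omega
    rw [← xv_nz n, ← this]
    exact heven k hk0
  · left
    have : (2 : ℤ) * k + 1 = n.1 := by omega
    rw [← xv_nz n, ← this]
    exact hodd k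

include heven hodd in
lemma hD2 (p : Xpoly) : D (D p) = 0 := by
  induction p using MvPolynomial.induction_on with
  | C a =>
      have h : D (C a) = 0 := by
        rw [show (C a : Xpoly) = algebraMap (ZMod 2) Xpoly a from rfl]
        exact D.map_algebraMap a
      rw [h, map_zero]
  | add p q hp hq => rw [map_add, map_add, hp, hq, add_zero]
  | mul_X p n hp =>
      have hXn : D (D (X n)) = 0 := by
        rcases hDX D heven hodd n with h | ⟨k, h⟩
        · rw [h, map_zero]
        · rw [h]; exact der_sq D _
      simp only [Derivation.leibniz, map_add, smul_eq_mul, hXn, hp, mul_zero,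
        add_zero, zero_add]
      linear_combination char2 (D (X n) * D p)

include heven hodd in
lemma hcomm (p : Xpoly) : pderiv i1 (D p) = D (pderiv i1 p) := by
  induction p using MvPolynomial.induction_on with
  | C a =>
      have h : D (C a) = 0 := by
        rw [show (C a : Xpoly) = algebraMap (ZMod 2) Xpoly a from rfl]
        exact D.map_algebraMap a
      have h2 : pderiv i1 (C a : Xpoly) = 0 := by
        rw [show (C a : Xpoly) = algebraMap (ZMod 2) Xpoly a from rfl]
        exact (pderiv i1).map_algebraMap a
      rw [h, h2, map_zero, map_zero]
  | add p q hp hq => rw [map_add, map_add, map_add, map_add, hp, hq]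
  | mul_X p n hp =>
      have h1 : pderiv i1 (D (X n)) = 0 := by
        rcases hDX D heven hodd n with h | ⟨k, h⟩
        · rw [h, map_zero]
        · rw [h]; exact der_sq _ _
      have h2 : D (pderiv i1 (X n)) = 0 := by
        rw [pderiv_X, Pi.single_apply]
        split <;> simp
      simp only [Derivation.leibniz, map_add, smul_eq_mul]
      linear_combination p * h1 - p * h2 + X n * hp

/-- the substitution `x₁ ↦ 0` -/
noncomputable def π : Xpoly →ₐ[ZMod 2] Xpoly :=
  aeval (fun n : NZ => if (n : ℤ) = 1 then 0 else X n)

lemma pi_X (n : NZ) : π (X n) = if (n : ℤ) = 1 then 0 else X n := by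
  simp only [π, aeval_X]

lemma pi_X1 : π (X i1) = 0 := by
  rw [pi_X]; rfl

lemma pi_C (a : ZMod 2) : π (C a) = C a := by
  unfold π; rw [aeval_C]; rfl

lemma pi_dvd (p : Xpoly) : (X i1 : Xpoly) ∣ p + π p := by
  induction p using MvPolynomial.induction_on with
  | C a =>
      rw [pi_C, char2]
      exact dvd_zero _
  | add p q hp hq =>
      have := dvd_add hp hq
      have he : p + π p + (q + π q) = p + q + π (p + q) := by
        rw [map_add]; ring
      rwa [he] at this
  | mul_X p n hp =>
      rw [map_mul]
      by_cases hn : (n : ℤ) = 1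
      · have : n = i1 := Subtype.ext hn
        subst this
        rw [pi_X1, mul_zero, add_zero]
        exact dvd_mul_left _ _
      · have hπn : π (X n) = X n := by rw [π, aeval_X]; simp [hn]
        obtain ⟨w, hw⟩ := hp
        refine ⟨w * X n, ?_⟩
        rw [hπn]
        linear_combination (X n : Xpoly) * hw

lemma pi_zero_dvd (p : Xpoly) (h : π p = 0) : (X i1 : Xpoly) ∣ p := by
  have := pi_dvd p
  rwa [h, add_zero] at this

include hodd in
lemma hDX1 : D (X i1) = 0 := by
  have h := hodd 0
  rw [show (2 : ℤ) * 0 + 1 = 1 by norm_num, xv_one] at h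
  exact h

include heven hodd in
lemma keyB (r q : Xpoly) (hr : D r = 0) (hq : xv 1 * r = D q) :
    ∃ s t : Xpoly, D s = 0 ∧ r = xv 1 * s + D t := by
  rw [xv_one] at hq ⊢
  set pd := (pderiv i1 : Derivation (ZMod 2) Xpoly Xpoly) with hpd
  set t := π (pd q) with ht
  -- π r = π (pd (D q))
  have h1 : pd (X i1 * r) = X i1 * pd r + r := by
    rw [Derivation.leibniz, smul_eq_mul, smul_eq_mul, pderiv_X, Pi.single_eq_same, mul_one]
  have h2 : π r = π (pd (D q)) := by
    rw [← hq, h1, map_add, map_mul, pi_X1, zero_mul, zero_add]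
  have h3 : pd (D q) = D (pd q) := hcomm D heven hodd q
  -- π (D (pd q)) = π (D t)
  obtain ⟨w, hw⟩ := pi_dvd (pd q)
  have h5 : D (pd q) + D t = X i1 * D w := by
    rw [← map_add, hw, Derivation.leibniz, hDX1 D hodd, smul_eq_mul, smul_eq_mul,
      mul_zero, add_zero]
  have h6 : π (D (pd q)) = π (D t) := by
    apply c2eq
    have := congrArg π h5
    rw [map_add, map_mul, pi_X1, zero_mul] at this
    exact this
  have h7 : π (r + D t) = 0 := by
    rw [map_add, h2, h3, h6, char2]
  obtain ⟨s, hs⟩ := pi_zero_dvd _ h7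
  refine ⟨s, t, ?_, ?_⟩
  · have h8 : X i1 * D s = 0 := by
      have e1 : D (X i1 * s) = X i1 * D s := by
        rw [Derivation.leibniz, hDX1 D hodd, smul_eq_mul, smul_eq_mul, mul_zero, add_zero]
      have e2 : D (r + D t) = 0 := by
        rw [map_add, hr, hD2 D heven hodd, add_zero]
      rw [← e1, ← hs, e2]
    rcases mul_eq_zero.mp h8 with h | h
    · exact absurd h (X_ne_zero i1)
    · exact h
  · linear_combination hs - char2 (D t)

include heven hodd in
lemma hSL (M : ℕ) :
    ∑ j ∈ Finset.range M, xv (j + 1 : ℤ) * xv ((M : ℤ) - (j : ℤ)) = D (xv ((M : ℤ) + 1)) := by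
  rcases Nat.even_or_odd M with ⟨l, hl⟩ | ⟨l, hl⟩
  · -- M even, RHS = 0
    have hR : ((M : ℤ) + 1) = 2 * l + 1 := by omega
    rw [hR, hodd l]
    apply Finset.sum_involution (fun a _ => M - 1 - a)
    · intro a ha
      rw [Finset.mem_range] at ha
      have e1 : ((M - 1 - a : ℕ) : ℤ) + 1 = (M : ℤ) - a := by omega
      have e2 : (M : ℤ) - ((M - 1 - a : ℕ) : ℤ) = (a : ℤ) + 1 := by omega
      rw [e1, e2]
      linear_combination char2 (xv ((a : ℤ) + 1) * xv ((M : ℤ) - a))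
    · intro a ha _
      rw [Finset.mem_range] at ha
      omega
    · intro a ha
      rw [Finset.mem_range] at ha ⊢
      omega
    · intro a ha
      rw [Finset.mem_range] at ha
      omega
  · -- M odd, M = 2l+1
    have hlM : l ∈ Finset.range M := by rw [Finset.mem_range]; omega
    rw [← Finset.add_sum_erase _ _ hlM]
    have hfl : xv ((l : ℤ) + 1) * xv ((M : ℤ) - l) = xv ((l : ℤ) + 1) ^ 2 := by
      rw [show (M : ℤ) - l = (l : ℤ) + 1 by omega, pow_two]
    have hR : D (xv ((M : ℤ) + 1)) = xv ((l : ℤ) + 1) ^ 2 := by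
      rw [show ((M : ℤ) + 1) = 2 * ((l : ℤ) + 1) by omega]
      exact heven ((l : ℤ) + 1) (by omega)
    rw [hfl, hR]
    have hz : ∑ j ∈ (Finset.range M).erase l, xv (j + 1 : ℤ) * xv ((M : ℤ) - (j : ℤ)) = 0 := by
      apply Finset.sum_involution (fun a _ => M - 1 - a)
      · intro a ha
        obtain ⟨hne, ha⟩ := Finset.mem_erase.mp ha
        rw [Finset.mem_range] at ha
        have e1 : ((M - 1 - a : ℕ) : ℤ) + 1 = (M : ℤ) - a := by omega
        have e2 : (M : ℤ) - ((M - 1 - a : ℕ) : ℤ) = (a : ℤ) + 1 := by omega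
        rw [e1, e2]
        linear_combination char2 (xv ((a : ℤ) + 1) * xv ((M : ℤ) - a))
      · intro a ha _
        obtain ⟨hne, ha⟩ := Finset.mem_erase.mp ha
        rw [Finset.mem_range] at ha
        omega
      · intro a ha
        obtain ⟨hne, ha⟩ := Finset.mem_erase.mp ha
        rw [Finset.mem_range] at ha
        rw [Finset.mem_erase, Finset.mem_range]
        omega
      · intro a ha
        obtain ⟨hne, ha⟩ := Finset.mem_erase.mp ha
        rw [Finset.mem_range] at ha
        omega
    rw [hz, add_zero]

end D

lemma hresum (i : ℕ) (F : ℕ → Xpoly) :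
    ∀ m : ℕ, ∑ j ∈ Finset.range m, (if i < j then F j else 0) =
      ∑ t ∈ Finset.range (m - (i + 1)), F (i + 1 + t) := by
  intro m
  induction m with
  | zero => simp
  | succ m ih =>
      rw [Finset.sum_range_succ, ih]
      by_cases h : i < m
      · rw [if_pos h, show m + 1 - (i + 1) = (m - (i + 1)) + 1 by omega,
          Finset.sum_range_succ, show i + 1 + (m - (i + 1)) = m by omega]
      · rw [if_neg h, add_zero, show m + 1 - (i + 1) = m - (i + 1) by omega]

lemma happ (M : ℕ) (c : ℕ → Xpoly) (i : ℕ) :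
    (∑ j ∈ Finset.range M, Finsupp.single j (c j)) i = if i < M then c i else 0 := by
  rw [Finsupp.finset_sum_apply]
  simp only [Finsupp.single_apply]
  rw [Finset.sum_ite_eq' (Finset.range M) i c]
  simp only [Finset.mem_range]

end Stmt15Aux

set_option maxHeartbeats 2000000 in
open Stmt15Aux in
/-- The chain map `Φ : A_+ ⊗ X → X`, `Φ(a_{n-1/2} p) = x_n p`, induces on homology an
injective map `H(A_+ ⊗ X) → H(X)` whose image is exactly `x̄_1 · H(X)`:
(i) a cycle whose image under `Φ` is a boundary is itself a boundary;
(ii) the image under `Φ` of any cycle is, modulo boundaries, `x_1` times a cycle;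
(iii) `x_1` times any cycle is, modulo boundaries, the image under `Φ` of some cycle. -/
theorem stmt15 (D : Derivation (ZMod 2) Xpoly Xpoly)
    (heven : ∀ k : ℤ, k ≠ 0 → D (xv (2 * k)) = (xv k) ^ 2)
    (hodd : ∀ k : ℤ, D (xv (2 * k + 1)) = 0)
    (dA : AX →ₗ[ZMod 2] AX)
    (hdA : ∀ (m : ℕ) (p : Xpoly), dA (Finsupp.single m p) =
      (∑ j ∈ Finset.range m, Finsupp.single j (xv (m - j : ℤ) * p)) +
        Finsupp.single m (D p))
    (Φ : AX →ₗ[ZMod 2] Xpoly)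
    (hΦ : ∀ (m : ℕ) (p : Xpoly), Φ (Finsupp.single m p) = xv (m + 1 : ℤ) * p) :
    (∀ f : AX, dA f = 0 → (∃ q : Xpoly, Φ f = D q) → ∃ g : AX, f = dA g) ∧
    (∀ f : AX, dA f = 0 → ∃ r q : Xpoly, D r = 0 ∧ Φ f = xv 1 * r + D q) ∧
    (∀ r : Xpoly, D r = 0 → ∃ f : AX, dA f = 0 ∧ ∃ q : Xpoly, xv 1 * r = Φ f + D q) := by
  -- chain map property
  have hchain : ∀ f : AX, Φ (dA f) = D (Φ f) := by
    intro f
    induction f using Finsupp.induction_linear with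
    | zero => simp
    | add f g hf hg => simp only [map_add, hf, hg]
    | single a b =>
        rw [hdA, map_add, map_sum, hΦ]
        simp only [hΦ]
        have e1 : ∑ j ∈ Finset.range a, xv ((j : ℤ) + 1) * (xv ((a : ℤ) - j) * b) =
            (∑ j ∈ Finset.range a, xv ((j : ℤ) + 1) * xv ((a : ℤ) - j)) * b := by
          rw [Finset.sum_mul]
          exact Finset.sum_congr rfl fun j _ => by ring
        rw [e1, hSL D heven hodd a, Derivation.leibniz, smul_eq_mul, smul_eq_mul]
        ring
  -- dA ∘ dA on singles
  have dA2single : ∀ (m : ℕ) (p : Xpoly), dA (dA (Finsupp.single m p)) = 0 := by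
    intro m p
    refine Finsupp.ext fun i => ?_
    rw [hdA, map_add, map_sum, hdA]
    simp only [hdA]
    rw [Finsupp.coe_zero, Pi.zero_apply]
    rw [Finsupp.add_apply, Finsupp.add_apply, Finsupp.finset_sum_apply]
    simp only [Finsupp.add_apply, happ, Finsupp.single_apply]
    rw [Finset.sum_add_distrib, Finset.sum_ite_eq' (Finset.range m) i]
    simp only [Finset.mem_range]
    rw [hD2 D heven hodd, ite_self]
    by_cases hi : i < m
    · have hs1 : ∑ j ∈ Finset.range m,
          (if i < j then xv ((j : ℤ) - i) * (xv ((m : ℤ) - j) * p) else 0) =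
          D (xv ((m : ℤ) - i)) * p := by
        rw [hresum i _ m]
        have e : ∀ t ∈ Finset.range (m - (i + 1)),
            xv (((i + 1 + t : ℕ) : ℤ) - i) * (xv ((m : ℤ) - ((i + 1 + t : ℕ) : ℤ)) * p) =
            xv ((t : ℤ) + 1) * xv (((m - (i + 1) : ℕ) : ℤ) - (t : ℤ)) * p := by
          intro t ht
          have e1 : ((i + 1 + t : ℕ) : ℤ) - i = (t : ℤ) + 1 := by push_cast; ring
          have e2 : (m : ℤ) - ((i + 1 + t : ℕ) : ℤ) = ((m - (i + 1) : ℕ) : ℤ) - (t : ℤ) := by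
            omega
          rw [e1, e2]; ring
        rw [Finset.sum_congr rfl e, ← Finset.sum_mul, hSL D heven hodd (m - (i + 1)),
          show ((m - (i + 1) : ℕ) : ℤ) + 1 = (m : ℤ) - i by omega]
      rw [hs1, if_pos hi, if_pos hi, Derivation.leibniz]
      simp only [smul_eq_mul]
      linear_combination char2 (D (xv ((m : ℤ) - i)) * p) + char2 (xv ((m : ℤ) - i) * D p)
    · have hz : ∑ j ∈ Finset.range m,
          (if i < j then xv ((j : ℤ) - i) * (xv ((m : ℤ) - j) * p) else 0) = 0 :=
        Finset.sum_eq_zero fun j hj => by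
          rw [Finset.mem_range] at hj; rw [if_neg (by omega)]
      rw [hz, if_neg hi, if_neg hi]
      simp
  -- char 2 on AX
  have char2A : ∀ a : AX, a + a = 0 := fun a => char2 a
  -- component formula
  have CF : ∀ (N : ℕ) (f : AX), f.support ⊆ Finset.range (N + 1) → ∀ i : ℕ,
      dA f i = D (f i) +
        ∑ m ∈ Finset.range (N + 1), (if i < m then xv ((m : ℤ) - (i : ℤ)) * f m else 0) := by
    intro N f hf i
    have hrep : f = ∑ m ∈ Finset.range (N + 1), Finsupp.single m (f m) := by
      refine Finsupp.ext fun j => ?_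
      rw [happ]
      split
      · rfl
      · rename_i h
        by_contra hne
        exact h (Finset.mem_range.mp (hf (Finsupp.mem_support_iff.mpr hne)))
    conv_lhs => rw [hrep]
    rw [map_sum, Finsupp.finset_sum_apply]
    simp only [hdA, Finsupp.add_apply, happ, Finsupp.single_apply]
    rw [Finset.sum_add_distrib, Finset.sum_ite_eq' (Finset.range (N + 1)) i]
    simp only [Finset.mem_range]
    by_cases hi : i < N + 1
    · rw [if_pos hi, add_comm]
    · rw [if_neg hi]
      have hfi : f i = 0 := by
        by_contra hne
        exact hi (Finset.mem_range.mp (hf (Finsupp.mem_support_iff.mpr hne)))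
      rw [hfi, map_zero, add_zero, zero_add]
  -- main reduction lemma
  have reduce : ∀ (N : ℕ) (f : AX), f.support ⊆ Finset.range (N + 1) → dA f = 0 →
      ∃ (r : Xpoly) (g : AX), D r = 0 ∧ f = Finsupp.single 0 r + dA g := by
    intro N
    induction N with
    | zero =>
        intro f hf hc
        have hf0 : f = Finsupp.single 0 (f 0) := by
          rw [← Finsupp.support_subset_singleton]
          simpa using hf
        have hD0 : D (f 0) = 0 := by
          have := CF 0 f hf 0
          rw [hc] at this
          simpa using this.symm
        exact ⟨f 0, 0, hD0, by rw [show dA 0 = 0 from map_zero dA, add_zero]; exact hf0⟩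
    | succ N ih =>
        intro f hf hc
        set p := f (N + 1) with hp
        have hDp : D p = 0 := by
          have := CF (N + 1) f hf (N + 1)
          rw [hc] at this
          have hz : ∑ m ∈ Finset.range (N + 2),
              (if N + 1 < m then xv ((m : ℤ) - ((N + 1 : ℕ) : ℤ)) * f m else 0) = 0 := by
            apply Finset.sum_eq_zero
            intro m hm
            rw [Finset.mem_range] at hm
            rw [if_neg (by omega)]
          rw [hz, add_zero] at this
          exact this.symm
        have hx1p : xv 1 * p = D (f N) := by
          have := CF (N + 1) f hf N
          rw [hc] at this
          have hs : ∑ m ∈ Finset.range (N + 2),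
              (if N < m then xv ((m : ℤ) - (N : ℤ)) * f m else 0) = xv 1 * p := by
            rw [Finset.sum_eq_single (N + 1)]
            · rw [if_pos (by omega), show ((N + 1 : ℕ) : ℤ) - (N : ℤ) = 1 by omega]
            · intro m hm hne
              rw [Finset.mem_range] at hm
              rw [if_neg (by omega)]
            · intro h
              exact absurd (Finset.mem_range.mpr (by omega)) h
          rw [hs] at this
          apply c2eq
          rw [add_comm]
          exact this.symm
        obtain ⟨s, t, hs, hst⟩ := keyB D heven hodd p (f N) hDp hx1p
        set g₀ : AX := Finsupp.single (N + 2) s + Finsupp.single (N + 1) t with hg₀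
        have hdAg₀ : ∀ i : ℕ, dA g₀ i =
            (if i < N + 2 then xv (((N + 2 : ℕ) : ℤ) - i) * s else 0) +
            ((if i < N + 1 then xv (((N + 1 : ℕ) : ℤ) - i) * t else 0) +
              (if N + 1 = i then D t else 0)) := by
          intro i
          rw [hg₀, map_add, hdA, hdA, hs, Finsupp.single_zero, add_zero]
          rw [Finsupp.add_apply, Finsupp.add_apply, happ, happ, Finsupp.single_apply]
        set f' := f + dA g₀ with hf'
        have hf'top : ∀ i : ℕ, N + 1 ≤ i → f' i = 0 := by
          intro i hi
          rw [hf', Finsupp.add_apply, hdAg₀ i]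
          by_cases hieq : i = N + 1
          · subst hieq
            rw [if_pos (by omega), if_neg (by omega), if_pos rfl,
              show ((N + 2 : ℕ) : ℤ) - ((N + 1 : ℕ) : ℤ) = 1 by omega]
            rw [← hp, hst]
            linear_combination char2 (xv 1 * s + D t)
          · have h2 : f i = 0 := by
              by_contra hne
              have := Finset.mem_range.mp (hf (Finsupp.mem_support_iff.mpr hne))
              omega
            rw [h2, if_neg (by omega), if_neg (by omega), if_neg (by omega)]
            simp
        have hf'supp : f'.support ⊆ Finset.range (N + 1) := by
          intro i hi
          rw [Finsupp.mem_support_iff] at hi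
          rw [Finset.mem_range]
          by_contra h
          exact hi (hf'top i (by omega))
        have hf'cyc : dA f' = 0 := by
          rw [hf', map_add, hc, zero_add, hg₀, map_add, map_add, dA2single, dA2single, add_zero]
        obtain ⟨r, g₁, hr, hrep'⟩ := ih f' hf'supp hf'cyc
        refine ⟨r, g₁ + g₀, hr, ?_⟩
        rw [map_add, ← add_assoc, ← hrep']
        rw [hf']
        rw [add_assoc, char2A, add_zero]
  refine ⟨?_, ?_, ?_⟩
  · -- (i)
    rintro f hf ⟨q, hq⟩
    obtain ⟨r, g, hr, hfe⟩ := reduce (f.support.sup id) f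
      (fun a ha => Finset.mem_range.mpr (Nat.lt_succ_of_le (Finset.le_sup (f := id) ha))) hf
    have hΦ0 : ∀ c : Xpoly, Φ (Finsupp.single 0 c) = xv 1 * c := by
      intro c; rw [hΦ 0 c]; norm_num
    have h1 : Φ f = xv 1 * r + D (Φ g) := by
      rw [hfe, map_add, hΦ0, hchain]
    have h2 : xv 1 * r = D (q + Φ g) := by
      rw [show D (q + Φ g) = D q + D (Φ g) from map_add D q (Φ g)]
      linear_combination hq - h1 - char2 (D (Φ g))
    obtain ⟨s, t, hs, hst⟩ := keyB D heven hodd r (q + Φ g) hr h2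
    refine ⟨Finsupp.single 1 s + Finsupp.single 0 t + g, ?_⟩
    rw [map_add, map_add, hdA 1 s, hdA 0 t, hs, hfe, hst]
    simp only [Finset.range_one, Finset.sum_singleton, Finset.range_zero,
      Finset.sum_empty, Finsupp.single_zero, add_zero, zero_add,
      Nat.cast_one, Nat.cast_zero, sub_zero]
    rw [Finsupp.single_add]
  · -- (ii)
    intro f hf
    obtain ⟨r, g, hr, hfe⟩ := reduce (f.support.sup id) f
      (fun a ha => Finset.mem_range.mpr (Nat.lt_succ_of_le (Finset.le_sup (f := id) ha))) hf
    refine ⟨r, Φ g, hr, ?_⟩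
    have hΦ0 : Φ (Finsupp.single 0 r) = xv 1 * r := by rw [hΦ 0 r]; norm_num
    rw [hfe, map_add, hΦ0, hchain]
  · -- (iii)
    intro r hr
    refine ⟨Finsupp.single 0 r, ?_, 0, ?_⟩
    · rw [hdA]
      simp [hr]
    · have hΦ0 : Φ (Finsupp.single 0 r) = xv 1 * r := by rw [hΦ 0 r]; norm_num
      rw [hΦ0, map_zero, add_zero]
end

section
/- In the chain complex C ⊗ X (free X-module on symbols c_n, n ∈ Z) with differential ∂(c_n x^e) = c_n (∂ x^e) + Σ_{i ∈ Z\{0\}} i·e_i · c_{n+i} x_i^{-1} x^e (mod 2), the operator α_{(j,0)}^* defined by α_{(j,0)}^*(c_n x^e) = c_{n-j} x_j x^e for odd j satisfies ∂ α_{(j,0)}^* + α_{(j,0)}^* ∂ = 1. Consequently the homology of (C ⊗ X, ∂) is zero. -/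
open MvPolynomial

/-- `C ⊗ X`, the free `X`-module with basis `{c_n : n ∈ ℤ}`. -/
abbrev CX := ℤ →₀ Xpoly

/-- In the chain complex `C ⊗ X`, with differential
`∂(c_n x^e) = c_n (∂ x^e) + Σ_i i e_i c_{n+i} x_i⁻¹ x^e` (mod 2), the source operator
`α_{(j,0)}^*` with `α_{(j,0)}^*(c_n x^e) = c_{n-j} x_j x^e`, for odd `j`, satisfies
`∂ α_{(j,0)}^* + α_{(j,0)}^* ∂ = 1`.  Consequently the homology of `(C ⊗ X, ∂)` is
zero. -/
theorem stmt16 (D : Derivation (ZMod 2) Xpoly Xpoly)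
    (heven : ∀ k : ℤ, k ≠ 0 → D (xv (2 * k)) = (xv k) ^ 2)
    (hodd : ∀ k : ℤ, D (xv (2 * k + 1)) = 0)
    (dC : CX →ₗ[ZMod 2] CX)
    (hdC : ∀ (n : ℤ) (e : NZ →₀ ℕ), dC (Finsupp.single n (monomial e 1)) =
      Finsupp.single n (D (monomial e 1)) +
        ∑ i ∈ e.support, (((i : ℤ) * (e i : ℤ) : ℤ) : ZMod 2) •
          Finsupp.single (n + (i : ℤ)) (monomial (e.update i (e i - 1)) (1 : ZMod 2)))
    (j : ℤ) (hj : Odd j)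
    (K : CX →ₗ[ZMod 2] CX)
    (hK : ∀ (n : ℤ) (e : NZ →₀ ℕ), K (Finsupp.single n (monomial e 1)) =
      Finsupp.single (n - j) (xv j * monomial e 1)) :
    (∀ f : CX, dC (K f) + K (dC f) = f) ∧
    (∀ f : CX, dC f = 0 → ∃ g : CX, f = dC g) := by
  obtain ⟨kj, hkj⟩ := hj
  have hkj' : j = 2 * kj + 1 := by omega
  have hj0 : j ≠ 0 := by omega
  set jz : NZ := ⟨j, hj0⟩ with hjzdef
  have hDxj : D (xv j) = 0 := by rw [hkj']; exact hodd kj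
  have addself : ∀ x : CX, x + x = 0 := by
    intro x
    rw [← one_smul (ZMod 2) x, ← add_smul]
    rw [show (1 + 1 : ZMod 2) = 0 from rfl, zero_smul]
  have oddcast : ∀ m : ℤ, Odd m → ((m : ZMod 2) = 1) := by
    rintro m ⟨t, ht⟩
    subst ht
    push_cast
    rw [show ((2 : ZMod 2)) = 0 from rfl]  -- maybe t + t form
    ring
  have F1 : ∀ g : NZ →₀ ℕ, xv j * (monomial g (1 : ZMod 2))
      = monomial (g + Finsupp.single jz 1) 1 := by
    intro g
    rw [xv, dif_pos hj0, show (X jz : Xpoly) = monomial (Finsupp.single jz 1) 1 by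
      rw [← X_pow_eq_monomial, pow_one], monomial_mul, one_mul, add_comm]
  have Kp : ∀ (n : ℤ) (p : Xpoly), K (Finsupp.single n p)
      = Finsupp.single (n - j) (xv j * p) := by
    intro n p
    induction p using MvPolynomial.induction_on' with
    | monomial e a =>
      rw [show (monomial e a : Xpoly) = a • monomial e 1 by
        rw [smul_monomial, smul_eq_mul, mul_one]]
      rw [← Finsupp.smul_single, map_smul, hK, Finsupp.smul_single, mul_smul_comm]
    | add p q hp hq =>
      rw [Finsupp.single_add, map_add, hp, hq, mul_add, Finsupp.single_add]
  -- update lemmas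
  have U1 : ∀ e : NZ →₀ ℕ, (e + Finsupp.single jz 1).update jz (e jz) = e := by
    intro e
    rw [Finsupp.update_eq_erase_add_single, Finsupp.erase_add, Finsupp.erase_single,
      add_zero, ← Finsupp.update_eq_erase_add_single, Finsupp.update_self]
  have U2 : ∀ (e : NZ →₀ ℕ) (i : NZ), i ≠ jz → ∀ v : ℕ,
      (e + Finsupp.single jz 1).update i v = e.update i v + Finsupp.single jz 1 := by
    intro e i hi v
    rw [Finsupp.update_eq_erase_add_single, Finsupp.erase_add,
      Finsupp.erase_single_ne hi, Finsupp.update_eq_erase_add_single]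
    abel
  have Eap : ∀ (e : NZ →₀ ℕ) (i : NZ), i ≠ jz →
      (e + Finsupp.single jz 1 : NZ →₀ ℕ) i = e i := by
    intro e i hi
    rw [Finsupp.add_apply, Finsupp.single_apply, if_neg (fun hh => hi hh.symm), add_zero]
  have Ejz : ∀ e : NZ →₀ ℕ, (e + Finsupp.single jz 1 : NZ →₀ ℕ) jz = e jz + 1 := by
    intro e
    rw [Finsupp.add_apply, Finsupp.single_apply, if_pos rfl]
  have hsupp : ∀ e : NZ →₀ ℕ,
      (e + Finsupp.single jz 1).support = insert jz e.support := by
    intro e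
    ext i
    simp only [Finsupp.mem_support_iff, Finset.mem_insert]
    by_cases h : i = jz
    · subst h
      rw [Ejz e]
      simp
    · rw [Eap e i h]
      simp [h]
  have hbasis : ∀ (n : ℤ) (e : NZ →₀ ℕ),
      dC (K (Finsupp.single n (monomial e 1))) + K (dC (Finsupp.single n (monomial e 1)))
        = Finsupp.single n (monomial e 1) := by
    intro n e
    set δ : NZ →₀ ℕ := Finsupp.single jz 1 with hδ
    rw [hK, F1, hdC, hdC, map_add, map_sum]
    simp only [map_smul, hK, Kp]
    have F2 : D (monomial (e + δ) (1 : ZMod 2)) = xv j * D (monomial e 1) := by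
      rw [← F1, Derivation.leibniz, hDxj, smul_zero, add_zero, smul_eq_mul]
    rw [F2]
    rw [show ∀ A S1 S2 : CX, (A + S1) + (A + S2) = (A + A) + (S1 + S2) from
      fun A S1 S2 => by abel, addself, zero_add]
    -- sums
    rw [hsupp e]
    rw [Finset.sum_subset (Finset.subset_insert jz e.support)
      (by
        intro i _ hi
        have h0 : e i = 0 := by
          by_contra h
          exact hi (Finsupp.mem_support_iff.mpr h)
        rw [h0]
        norm_num)]
    rw [← Finset.sum_add_distrib]
    rw [Finset.sum_eq_single_of_mem jz (Finset.mem_insert_self jz _)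
      (by
        intro i _ hi
        have h1 : (e + δ) i = e i := Eap e i hi
        rw [h1, U2 e i hi (e i - 1), ← F1,
          show n - j + (i : ℤ) = n + (i : ℤ) - j by ring]
        exact addself _)]
    -- the jz term
    have hjz1 : (e + δ) jz = e jz + 1 := Ejz e
    have hupd : (e + δ).update jz ((e + δ) jz - 1) = e := by
      rw [hjz1, Nat.add_sub_cancel]; exact U1 e
    rw [hupd, hjz1, show n - j + (jz : ℤ) = n by rw [hjzdef]; ring,
      show n + (jz : ℤ) - j = n by rw [hjzdef]; ring]
    have hjzz : ((jz : ℤ)) = j := rfl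
    cases h0 : e jz with
    | zero =>
      norm_num [hjzz]
      rw [show ((j : ℤ) : ZMod 2) = 1 from oddcast _ ⟨kj, by omega⟩, one_smul]
    | succ s =>
      have hm : xv j * monomial (e.update jz (s + 1 - 1)) (1 : ZMod 2) = monomial e 1 := by
        rw [F1, Finsupp.update_eq_erase_add_single, hδ, add_assoc, ← Finsupp.single_add,
          show s + 1 - 1 + 1 = e jz by omega, ← Finsupp.update_eq_erase_add_single,
          Finsupp.update_self]
      rw [hm, ← add_smul, hjzz,
        show ((((j : ℤ) * ((s + 1 + 1 : ℕ) : ℤ) : ℤ)) : ZMod 2) +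
            ((((j : ℤ) * ((s + 1 : ℕ) : ℤ) : ℤ)) : ZMod 2)
          = (((j * (2 * (s : ℤ) + 3) : ℤ)) : ZMod 2) by push_cast; ring,
        oddcast _ ⟨j * (s:ℤ) + j + kj, by rw [hkj']; ring⟩, one_smul]
  have main : ∀ f : CX, dC (K f) + K (dC f) = f := by
    intro f
    induction f using Finsupp.induction_linear with
    | zero => simp
    | add f g hf hg =>
      rw [map_add, map_add, map_add, map_add, add_add_add_comm, hf, hg]
    | single n p =>
      induction p using MvPolynomial.induction_on' with
      | monomial e a =>
        rw [show (monomial e a : Xpoly) = a • monomial e 1 by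
          rw [smul_monomial, smul_eq_mul, mul_one], ← Finsupp.smul_single,
          map_smul, map_smul, map_smul, map_smul, ← smul_add, hbasis]
      | add p q hp hq =>
        rw [Finsupp.single_add, map_add, map_add, map_add, map_add, add_add_add_comm, hp, hq]
  refine ⟨main, fun f hf => ⟨K f, ?_⟩⟩
  have := main f
  rw [hf, map_zero, add_zero] at this
  exact this.symm
end

section
/- In the insular complex A_+ ⊗ X ⊗ B_+, for n ≥ 1 let s_n = Σ_{k+l=n, k,l>0} a_{k-1/2} b_{l-1/2} and let h = Σ_m a_{1/2+2m} b_{n+1/2-2m} (sum over m ≥ 0 with both indices positive). Then ∂h = x_1 s_n + x_3 s_{n-2} + x_5 s_{n-4} + ··· (sum over odd j ≥ 1 with n-j+1 ≥ 1 of x_j s_{n-j+1}). Consequently in homology, x̄_1 s̄_n = Σ_{k≥1} x̄_{2k+1} s̄_{n-2k}. -/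
open MvPolynomial

/-- `A_+ ⊗ X ⊗ B_+`, the free `X`-module with basis `a_i b_j` over positive half-integers
`i, j`; the index `(m, k) : ℕ × ℕ` stands for `a_{m+1/2} b_{k+1/2}`. -/
abbrev ABX := (ℕ × ℕ) →₀ Xpoly

/-- `s_n = Σ_{k+l=n, k,l>0} a_{k-1/2} b_{l-1/2}`: in our indexing,
`s_n = Σ_{i=0}^{n-1} a_{i+1/2} b_{(n-1-i)+1/2}`. -/
noncomputable def sN (n : ℕ) : ABX :=
  ∑ i ∈ Finset.range n, Finsupp.single (i, n - 1 - i) (1 : Xpoly)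

lemma sumA (n p q : ℕ) :
    (∑ m ∈ Finset.range (n / 2 + 1),
      if p < 2 * m then if n - 2 * m = q then xv ((2 * m : ℕ) - (p : ℤ)) else 0 else 0)
    = if p + q < n ∧ (n + q) % 2 = 0 then xv ((n : ℤ) - p - q) else 0 := by
  by_cases h : p + q < n ∧ (n + q) % 2 = 0
  · rw [if_pos h]
    rw [Finset.sum_eq_single_of_mem ((n - q) / 2) (by simp only [Finset.mem_range]; omega)]
    · rw [if_pos (by omega), if_pos (by omega)]
      congr 1
      push_cast
      omega
    · intro m hm hne
      simp only [Finset.mem_range] at hm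
      split_ifs with h1 h2 <;> [exfalso; rfl; rfl]
      omega
  · rw [if_neg h]
    apply Finset.sum_eq_zero
    intro m hm
    simp only [Finset.mem_range] at hm
    split_ifs with h1 h2 <;> [exfalso; rfl; rfl]
    omega

lemma sumB (n p q : ℕ) :
    (∑ m ∈ Finset.range (n / 2 + 1),
      if 2 * m = p then if q < n - 2 * m then xv ((n - 2 * m : ℕ) - (q : ℤ)) else 0 else 0)
    = if p + q < n ∧ p % 2 = 0 then xv ((n : ℤ) - p - q) else 0 := by
  by_cases h : p + q < n ∧ p % 2 = 0
  · rw [if_pos h]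
    rw [Finset.sum_eq_single_of_mem (p / 2) (by simp only [Finset.mem_range]; omega)]
    · rw [if_pos (by omega), if_pos (by omega)]
      congr 1
      push_cast
      omega
    · intro m hm hne
      simp only [Finset.mem_range] at hm
      split_ifs with h1 h2 <;> [exfalso; rfl; rfl]
      omega
  · rw [if_neg h]
    apply Finset.sum_eq_zero
    intro m hm
    simp only [Finset.mem_range] at hm
    split_ifs with h1 h2 <;> [exfalso; rfl; rfl]
    omega

lemma sumR (n p q : ℕ) :
    (∑ k ∈ Finset.range ((n + 1) / 2),
      if p < n - 2 * k then if n - 2 * k - 1 - p = q then xv (2 * (k : ℤ) + 1) else 0 else 0)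
    = if p + q < n ∧ (n + p + q) % 2 = 1 then xv ((n : ℤ) - p - q) else 0 := by
  by_cases h : p + q < n ∧ (n + p + q) % 2 = 1
  · rw [if_pos h]
    rw [Finset.sum_eq_single_of_mem ((n - p - q - 1) / 2) (by simp only [Finset.mem_range]; omega)]
    · rw [if_pos (by omega), if_pos (by omega)]
      congr 1
      push_cast
      omega
    · intro m hm hne
      simp only [Finset.mem_range] at hm
      split_ifs with h1 h2 <;> [exfalso; rfl; rfl]
      omega
  · rw [if_neg h]
    apply Finset.sum_eq_zero
    intro m hm
    simp only [Finset.mem_range] at hm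
    split_ifs with h1 h2 <;> [exfalso; rfl; rfl]
    omega

/-- In the insular complex `A_+ ⊗ X ⊗ B_+` (Leibniz differential with
`∂ a_{n-1/2} = Σ a_{i-1/2} x_{n-i}`, `∂ b_{n-1/2} = Σ b_{i-1/2} x_{n-i}`), for `n ≥ 1`
the element `h = Σ_m a_{1/2+2m} b_{n+1/2-2m}` (over `m ≥ 0` with both indices positive)
satisfies `∂h = x_1 s_n + x_3 s_{n-2} + x_5 s_{n-4} + ⋯`; consequently
`x_1 s_n + Σ_{k≥1} x_{2k+1} s_{n-2k}` is a boundary, i.e. in homology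
`x̄_1 s̄_n = Σ_{k≥1} x̄_{2k+1} s̄_{n-2k}`. -/
theorem stmt19 (n : ℕ) (hn : 1 ≤ n)
    (D : Derivation (ZMod 2) Xpoly Xpoly)
    (heven : ∀ k : ℤ, k ≠ 0 → D (xv (2 * k)) = (xv k) ^ 2)
    (hodd : ∀ k : ℤ, D (xv (2 * k + 1)) = 0)
    (dAB : ABX →ₗ[ZMod 2] ABX)
    (hdAB : ∀ (m k : ℕ) (p : Xpoly), dAB (Finsupp.single (m, k) p) =
      (∑ j ∈ Finset.range m, Finsupp.single (j, k) (xv (m - j : ℤ) * p)) +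
      (∑ j ∈ Finset.range k, Finsupp.single (m, j) (xv (k - j : ℤ) * p)) +
      Finsupp.single (m, k) (D p)) :
    dAB (∑ m ∈ Finset.range (n / 2 + 1), Finsupp.single (2 * m, n - 2 * m) (1 : Xpoly)) =
      ∑ k ∈ Finset.range ((n + 1) / 2), xv (2 * k + 1) • sN (n - 2 * k) ∧
    ∃ g : ABX,
      xv 1 • sN n + ∑ k ∈ Finset.Ico 1 ((n + 1) / 2), xv (2 * k + 1) • sN (n - 2 * k) =
        dAB g := by
  have key : dAB (∑ m ∈ Finset.range (n / 2 + 1), Finsupp.single (2 * m, n - 2 * m) (1 : Xpoly)) =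
      ∑ k ∈ Finset.range ((n + 1) / 2), xv (2 * k + 1) • sN (n - 2 * k) := by
    rw [map_sum]
    refine Finsupp.ext fun pq => ?_
    obtain ⟨p, q⟩ := pq
    simp only [hdAB, Derivation.map_one_eq_zero, Finsupp.single_zero, add_zero, mul_one,
      Finsupp.coe_finset_sum, Finset.sum_apply, Finsupp.add_apply, Finsupp.single_apply,
      sN, Finsupp.smul_apply, Finset.smul_sum, Prod.mk.injEq, ite_and, smul_eq_mul, mul_ite,
      mul_one, mul_zero, Finset.sum_ite_irrel, Finset.sum_const_zero, Finset.sum_ite_eq',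
      Finset.mem_range]
    rw [Finset.sum_add_distrib]
    rw [sumA, sumB, sumR]
    split_ifs <;>
      first
        | (exfalso; omega)
        | rw [add_zero]
        | rw [zero_add]
        | exact CharTwo.add_self_eq_zero _
  refine ⟨key, ⟨∑ m ∈ Finset.range (n / 2 + 1), Finsupp.single (2 * m, n - 2 * m) (1 : Xpoly), ?_⟩⟩
  rw [key]
  conv_rhs => rw [Finset.range_eq_Ico,
    Finset.sum_eq_sum_Ico_succ_bot (show 0 < (n + 1) / 2 by omega)]
  norm_num
end
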